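/- arXiv:1806.07491 — 4 statements merged into one kernel-verified Lean document; each statement's English description precedes it below -/
import Mathlib

section
/- (Weighting/filling construction) Let a, b, c, d, t, u, v be non-negative integers with 2 ≤ v ≤ u−1 and 0 ≤ t ≤ u−1. Suppose there exist: a resolvable (v+1)-GDD of type u^{v+1}; 4-GDDs of types a^u d^1 and b^u d^1; a 4-GDD of type a^v b^1 c^1 whenever tc > 0; and a 4-GDD of type a^v b^1 whenever c = 0 or t < u−1. Then there exists a 4-GDD of type (va+b)^u (ct+d)^1. -/
open Finset

/-- `IsGDD k L` asserts the existence of a group divisible design with all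
blocks of size `k` whose group sizes are listed in `L`: the point set is
`Fin L.sum`, the map `grp` assigns each point its group, group `i` has
exactly `L.get i` points, the block set `B` is a nonempty collection of
`k`-element subsets of the points, every pair of points from distinct groups
lies in exactly one block, and no block contains two distinct points of the
same group. -/
def IsGDD (k : ℕ) (L : List ℕ) : Prop :=
  ∃ (grp : Fin L.sum → Fin L.length) (B : Finset (Finset (Fin L.sum))),
    B.Nonempty ∧
    (∀ i : Fin L.length, (Finset.univ.filter fun x => grp x = i).card = L.get i) ∧
    (∀ b ∈ B, b.card = k) ∧
    (∀ x y : Fin L.sum, grp x ≠ grp y → ∃! b, b ∈ B ∧ x ∈ b ∧ y ∈ b) ∧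
    (∀ x y : Fin L.sum, x ≠ y → grp x = grp y → ∀ b ∈ B, x ∈ b → y ∉ b)

/-- `IsRGDD k L` asserts the existence of a resolvable `k`-GDD with group
sizes listed in `L`: a `k`-GDD as in `IsGDD`, together with a colouring `col`
of the blocks such that each colour class used is a parallel class, i.e. every
point lies in exactly one block of each used colour. -/
def IsRGDD (k : ℕ) (L : List ℕ) : Prop :=
  ∃ (grp : Fin L.sum → Fin L.length) (B : Finset (Finset (Fin L.sum)))
    (col : Finset (Fin L.sum) → ℕ),
    B.Nonempty ∧
    (∀ i : Fin L.length, (Finset.univ.filter fun x => grp x = i).card = L.get i) ∧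
    (∀ b ∈ B, b.card = k) ∧
    (∀ x y : Fin L.sum, grp x ≠ grp y → ∃! b, b ∈ B ∧ x ∈ b ∧ y ∈ b) ∧
    (∀ x y : Fin L.sum, x ≠ y → grp x = grp y → ∀ b ∈ B, x ∈ b → y ∉ b) ∧
    (∀ x : Fin L.sum, ∀ b ∈ B, ∃! b', b' ∈ B ∧ col b' = col b ∧ x ∈ b')

/-- Abstract GDD block-set conditions over an arbitrary point type with a group map. -/
def GDDb {α γ : Type*} [DecidableEq α] (k : ℕ) (g : α → γ) (B : Finset (Finset α)) : Prop :=
  (∀ b ∈ B, b.card = k) ∧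
  (∀ x y : α, g x ≠ g y → ∃! b, b ∈ B ∧ x ∈ b ∧ y ∈ b) ∧
  (∀ x y : α, x ≠ y → g x = g y → ∀ b ∈ B, x ∈ b → y ∉ b)

lemma mem_map_equiv_symm {α β : Type*} [DecidableEq α] [DecidableEq β] (e : β ≃ α)
    (b : Finset α) (x : β) : x ∈ b.map e.symm.toEmbedding ↔ e x ∈ b := by
  simp only [Finset.mem_map, Equiv.coe_toEmbedding]
  constructor
  · rintro ⟨y, hy, rfl⟩; simpa using hy
  · intro hx; exact ⟨e x, hx, by simp⟩

lemma GDDb.comap {α β γ : Type*} [DecidableEq α] [DecidableEq β] {k : ℕ} {g : α → γ}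
    {B : Finset (Finset α)} (h : GDDb k g B) (e : β ≃ α) :
    GDDb k (fun x => g (e x)) (B.image fun b => b.map e.symm.toEmbedding) := by
  obtain ⟨h1, h2, h3⟩ := h
  refine ⟨?_, ?_, ?_⟩
  · rintro b hb
    simp only [Finset.mem_image] at hb
    obtain ⟨b0, hb0, rfl⟩ := hb
    rw [Finset.card_map]; exact h1 b0 hb0
  · intro x y hxy
    obtain ⟨b0, ⟨hb0, hx0, hy0⟩, hb0u⟩ := h2 (e x) (e y) hxy
    refine ⟨b0.map e.symm.toEmbedding,
      ⟨Finset.mem_image_of_mem _ hb0, (mem_map_equiv_symm e _ _).2 hx0,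
        (mem_map_equiv_symm e _ _).2 hy0⟩, ?_⟩
    rintro b' ⟨hb', hx', hy'⟩
    simp only [Finset.mem_image] at hb'
    obtain ⟨b1, hb1, rfl⟩ := hb'
    rw [mem_map_equiv_symm] at hx' hy'
    rw [hb0u b1 ⟨hb1, hx', hy'⟩]
  · intro x y hxy hg b hb hx hy
    simp only [Finset.mem_image] at hb
    obtain ⟨b1, hb1, rfl⟩ := hb
    rw [mem_map_equiv_symm] at hx hy
    exact h3 (e x) (e y) (fun hh => hxy (e.injective hh)) hg b1 hb1 hx hy

lemma GDDb.comp_iff {α γ δ : Type*} [DecidableEq α] {k : ℕ} {g : α → γ} {ι : γ → δ}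
    {B : Finset (Finset α)} (hι : Function.Injective ι) :
    GDDb k (fun x => ι (g x)) B ↔ GDDb k g B := by
  constructor
  · rintro ⟨h1, h2, h3⟩
    exact ⟨h1, fun x y hxy => h2 x y (fun h => hxy (hι h)),
      fun x y hxy hg => h3 x y hxy (congrArg ι hg)⟩
  · rintro ⟨h1, h2, h3⟩
    exact ⟨h1, fun x y hxy => h2 x y (fun h => hxy (show ι (g x) = ι (g y) from congrArg ι h)),
      fun x y hxy hg => h3 x y hxy (hι hg)⟩

lemma exists_equiv_comp {α β γ : Type*} [Fintype α] [Fintype β] [DecidableEq γ]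
    (f : α → γ) (g : β → γ)
    (h : ∀ i, Fintype.card {x : β // g x = i} = Fintype.card {z : α // f z = i}) :
    ∃ e : β ≃ α, ∀ x, f (e x) = g x := by
  classical
  refine ⟨(Equiv.sigmaFiberEquiv g).symm.trans
    ((Equiv.sigmaCongrRight fun i => Fintype.equivOfCardEq (h i)).trans
      (Equiv.sigmaFiberEquiv f)), fun x => ?_⟩
  simp only [Equiv.trans_apply]
  set p := (Equiv.sigmaCongrRight fun i => Fintype.equivOfCardEq (h i))
    ((Equiv.sigmaFiberEquiv g).symm x) with hp
  have h1 : (Equiv.sigmaFiberEquiv f) p = p.2.1 := rfl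
  have h2 : f p.2.1 = p.1 := p.2.2
  have h3 : p.1 = g x := rfl
  rw [h1, h2, h3]

lemma card_filter_congr_equiv {α β : Type*} [Fintype α] [Fintype β] [DecidableEq α] [DecidableEq β]
    (e : β ≃ α) (P : α → Prop) [DecidablePred P] :
    (Finset.univ.filter fun x : β => P (e x)).card = (Finset.univ.filter P).card := by
  apply Finset.card_bij (fun x _ => e x)
  · intro x hx; simp only [Finset.mem_filter, Finset.mem_univ, true_and] at hx ⊢; exact hx
  · intro x _ y _ hxy; exact e.injective hxy
  · intro z hz; simp only [Finset.mem_filter, Finset.mem_univ, true_and] at hz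
    exact ⟨e.symm z, by simp [hz], by simp⟩

lemma IsGDD.pull {β : Type*} [Fintype β] [DecidableEq β] {k : ℕ} {L : List ℕ}
    (h : IsGDD k L) {n : ℕ} (hn : L.length = n) (g : β → Fin n)
    (hc : ∀ i : Fin n, (Finset.univ.filter fun x => g x = i).card = L.get (Fin.cast hn.symm i)) :
    ∃ B : Finset (Finset β), B.Nonempty ∧ GDDb k g B := by
  classical
  obtain ⟨grp, B, hne, hcard, h1, h2, h3⟩ := h
  have hcc : ∀ i : Fin L.length,
      Fintype.card {x : β // (Fin.cast hn.symm (g x)) = i} = Fintype.card {z // grp z = i} := by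
    intro i
    rw [Fintype.card_subtype, Fintype.card_subtype, hcard i]
    have hfe : (Finset.univ.filter fun x : β => Fin.cast hn.symm (g x) = i)
        = (Finset.univ.filter fun x : β => g x = Fin.cast hn i) := by
      apply Finset.filter_congr; intro x _
      simp [Fin.ext_iff]
    rw [hfe, hc (Fin.cast hn i)]
    congr 1
  obtain ⟨e, he⟩ := exists_equiv_comp grp (fun x => Fin.cast hn.symm (g x)) hcc
  refine ⟨B.image fun b => b.map e.symm.toEmbedding, hne.image _, ?_⟩
  have hG : GDDb k (fun x => grp (e x)) (B.image fun b => b.map e.symm.toEmbedding) :=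
    GDDb.comap ⟨h1, h2, h3⟩ e
  have hfun : (fun x => grp (e x)) = fun x => Fin.cast hn.symm (g x) := funext he
  rw [hfun] at hG
  exact (GDDb.comp_iff (ι := Fin.cast hn.symm) (fun x y hxy => by
    simpa [Fin.ext_iff] using hxy)).1 hG

lemma GDDb.toIsGDD {α : Type*} [Fintype α] [DecidableEq α] {k : ℕ} {L : List ℕ} {n : ℕ}
    (hn : L.length = n) (g : α → Fin n) (B : Finset (Finset α)) (hne : B.Nonempty)
    (hc : ∀ i : Fin n, (Finset.univ.filter fun x => g x = i).card = L.get (Fin.cast hn.symm i))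
    (h : GDDb k g B) : IsGDD k L := by
  classical
  have hcard : Fintype.card α = L.sum := by
    calc Fintype.card α = ∑ i : Fin n, (Finset.univ.filter fun x => g x = i).card := by
          rw [← Finset.card_univ]
          exact Finset.card_eq_sum_card_fiberwise (fun x _ => Finset.mem_univ _)
    _ = ∑ i : Fin n, L.get (Fin.cast hn.symm i) := by
          exact Finset.sum_congr rfl (fun i _ => hc i)
    _ = ∑ i : Fin L.length, L.get i := by
          exact Fintype.sum_equiv (finCongr hn.symm) _ _ (fun i => rfl)
    _ = L.sum := by simpa using Fin.sum_univ_get L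
  have e : α ≃ Fin L.sum := Fintype.equivOfCardEq (by simp [hcard])
  have hG : GDDb k (fun z => g (e.symm z)) (B.image fun b => b.map e.symm.symm.toEmbedding) :=
    GDDb.comap h e.symm
  have hG2 : GDDb k (fun z => Fin.cast hn.symm (g (e.symm z)))
      (B.image fun b => b.map e.symm.symm.toEmbedding) :=
    (GDDb.comp_iff (ι := Fin.cast hn.symm) (fun x y hxy => by
      simpa [Fin.ext_iff] using hxy)).2 hG
  refine ⟨fun z => Fin.cast hn.symm (g (e.symm z)),
    B.image fun b => b.map e.symm.symm.toEmbedding, hne.image _, ?_, hG2.1, hG2.2.1, hG2.2.2⟩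
  intro i
  have hfe : (Finset.univ.filter fun z => Fin.cast hn.symm (g (e.symm z)) = i)
      = (Finset.univ.filter fun z => g (e.symm z) = Fin.cast hn i) := by
    apply Finset.filter_congr; intro x _; simp [Fin.ext_iff]
  rw [hfe, card_filter_congr_equiv e.symm (fun x => g x = Fin.cast hn i)]
  have := hc (Fin.cast hn i)
  rw [this]
  congr 1

lemma get_repapp1 {n w z : ℕ} (j : Fin ((List.replicate n w ++ [z]).length)) :
    (List.replicate n w ++ [z]).get j = if (j : ℕ) < n then w else z := by
  rcases j with ⟨i, hi⟩
  simp only [List.get_eq_getElem, List.getElem_append, List.length_replicate]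
  by_cases h : i < n
  · rw [dif_pos h, if_pos h, List.getElem_replicate]
  · rw [dif_neg h, if_neg h]
    have hlen : i < n + 1 := by simpa using hi
    have h0 : i - n = 0 := by omega
    simp [h0]

lemma get_repapp2 {n w y z : ℕ} (j : Fin ((List.replicate n w ++ [y, z]).length)) :
    (List.replicate n w ++ [y, z]).get j =
      if (j : ℕ) < n then w else if (j : ℕ) = n then y else z := by
  rcases j with ⟨i, hi⟩
  simp only [List.get_eq_getElem, List.getElem_append, List.length_replicate]
  by_cases h : i < n
  · rw [dif_pos h, if_pos h, List.getElem_replicate]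
  · rw [dif_neg h, if_neg h]
    have hlen : i < n + 2 := by simpa [Nat.add_assoc] using hi
    by_cases h2 : i = n
    · rw [if_pos h2]
      have h0 : i - n = 0 := by omega
      simp [h0]
    · rw [if_neg h2]
      have h0 : i - n = 1 := by omega
      simp [h0]

lemma card_filter_subtype {α : Type*} [DecidableEq α] (S : Finset α) (P : α → Prop)
    [DecidablePred P] :
    (Finset.univ.filter fun p : {x // x ∈ S} => P p.1).card = (S.filter P).card := by
  apply Finset.card_bij (fun p _ => p.1)
  · intro p hp
    simp only [Finset.mem_filter, Finset.mem_univ, true_and] at hp ⊢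
    exact ⟨p.2, hp⟩
  · intro p _ q _ h; exact Subtype.ext h
  · intro z hz
    simp only [Finset.mem_filter] at hz
    exact ⟨⟨z, hz.1⟩, by simp [hz.2], rfl⟩

lemma overlay_exists {α ν : Type*} [Fintype α] [DecidableEq α] [DecidableEq ν] (locg : α → ν)
    {L : List ℕ} (h : IsGDD 4 L) {n : ℕ} (hn : L.length = n)
    (S : Finset α) (gl : α → Fin n)
    (hc : ∀ i : Fin n, (S.filter fun p => gl p = i).card = L.get (Fin.cast hn.symm i))
    (compat : ∀ p ∈ S, ∀ q ∈ S, (gl p = gl q ↔ locg p = locg q)) :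
    ∃ Bs : Finset (Finset α), Bs.Nonempty ∧
      (∀ blk ∈ Bs, blk.card = 4 ∧ ∀ p ∈ blk, p ∈ S) ∧
      (∀ p ∈ S, ∀ q ∈ S, locg p ≠ locg q → ∃! blk, blk ∈ Bs ∧ p ∈ blk ∧ q ∈ blk) ∧
      (∀ p q : α, locg p = locg q → p ≠ q → ∀ blk ∈ Bs, p ∈ blk → q ∉ blk) := by
  classical
  have hc' : ∀ i : Fin n,
      (Finset.univ.filter fun p : {x // x ∈ S} => gl p.1 = i).card = L.get (Fin.cast hn.symm i) := by
    intro i; rw [card_filter_subtype S (fun p => gl p = i)]; exact hc i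
  obtain ⟨B, hBne, hB1, hB2, hB3⟩ := h.pull hn (fun p : {x // x ∈ S} => gl p.1) hc'
  set emb : {x // x ∈ S} ↪ α := Function.Embedding.subtype _ with hemb
  have hembmem : ∀ (blk : Finset {x // x ∈ S}) (p : {x // x ∈ S}),
      p.1 ∈ blk.map emb ↔ p ∈ blk := by
    intro blk p
    simp only [Finset.mem_map, hemb, Function.Embedding.coe_subtype]
    constructor
    · rintro ⟨q, hq, hqe⟩; rwa [Subtype.ext hqe] at hq
    · intro hp; exact ⟨p, hp, rfl⟩
  refine ⟨B.image fun blk => blk.map emb, hBne.image _, ?_, ?_, ?_⟩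
  · rintro blk hblk
    simp only [Finset.mem_image] at hblk
    obtain ⟨b1, hb1, rfl⟩ := hblk
    refine ⟨by rw [Finset.card_map]; exact hB1 b1 hb1, ?_⟩
    intro p hp
    simp only [Finset.mem_map, hemb, Function.Embedding.coe_subtype] at hp
    obtain ⟨q, _, rfl⟩ := hp
    exact q.2
  · intro p hp q hq hl
    have hgl : gl p ≠ gl q := fun hh => hl ((compat p hp q hq).1 hh)
    obtain ⟨b1, ⟨hb1, hpb, hqb⟩, hbu⟩ := hB2 ⟨p, hp⟩ ⟨q, hq⟩ hgl
    refine ⟨b1.map emb, ⟨Finset.mem_image_of_mem _ hb1,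
      (hembmem b1 ⟨p, hp⟩).2 hpb, (hembmem b1 ⟨q, hq⟩).2 hqb⟩, ?_⟩
    rintro blk' ⟨hblk', hp', hq'⟩
    simp only [Finset.mem_image] at hblk'
    obtain ⟨b2, hb2, rfl⟩ := hblk'
    rw [hembmem b2 ⟨p, hp⟩] at hp'
    rw [hembmem b2 ⟨q, hq⟩] at hq'
    rw [hbu b2 ⟨hb2, hp', hq'⟩]
  · intro p q hl hpq blk hblk hp hq
    simp only [Finset.mem_image] at hblk
    obtain ⟨b1, hb1, rfl⟩ := hblk
    have hpS : p ∈ S := by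
      simp only [Finset.mem_map, hemb, Function.Embedding.coe_subtype] at hp
      obtain ⟨q', _, rfl⟩ := hp; exact q'.2
    have hqS : q ∈ S := by
      simp only [Finset.mem_map, hemb, Function.Embedding.coe_subtype] at hq
      obtain ⟨q', _, rfl⟩ := hq; exact q'.2
    rw [hembmem b1 ⟨p, hpS⟩] at hp
    rw [hembmem b1 ⟨q, hqS⟩] at hq
    exact hB3 ⟨p, hpS⟩ ⟨q, hqS⟩ (fun hh => hpq (congrArg Subtype.val hh))
      (by exact (compat p hpS q hqS).2 hl) b1 hb1 hp hq

section PTsec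
variable {X : Type*} [Fintype X] [DecidableEq X]

/-- Point type of the inflated design. -/
abbrev PT (w : X → ℕ) (t c d : ℕ) : Type _ :=
  (Σ x : X, Fin (w x)) ⊕ ((Fin t × Fin c) ⊕ Fin d)

variable (w : X → ℕ) (t c d : ℕ)

/-- local-group labelling: base point for copies, `none` for new points. -/
def locgP : PT w t c d → Option X := Sum.elim (fun q => some q.1) (fun _ => none)

/-- copies over a base point -/
def copX (x : X) : Finset (PT w t c d) :=
  Finset.univ.image fun m : Fin (w x) => Sum.inl ⟨x, m⟩

/-- copies over a set of base points -/
def copS (s : Finset X) : Finset (PT w t c d) := s.biUnion (copX w t c d)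

/-- the `d` new filling points -/
def DS : Finset (PT w t c d) := Finset.univ.image fun m : Fin d => Sum.inr (Sum.inr m)

/-- batch `j` of `c` new points -/
def batchP (j : Fin t) : Finset (PT w t c d) :=
  Finset.univ.image fun m : Fin c => Sum.inr (Sum.inl (j, m))

@[simp] lemma inl_mem_copX {x y : X} {m : Fin (w y)} :
    (Sum.inl ⟨y, m⟩ : PT w t c d) ∈ copX w t c d x ↔ y = x := by
  simp only [copX, Finset.mem_image, Finset.mem_univ, true_and]
  constructor
  · rintro ⟨m', hm⟩
    exact (Sigma.mk.inj_iff.1 (Sum.inl.inj hm)).1.symm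
  · rintro rfl; exact ⟨m, rfl⟩

@[simp] lemma inr_not_mem_copX {x : X} {q} :
    (Sum.inr q : PT w t c d) ∉ copX w t c d x := by
  simp [copX]

lemma card_copX (x : X) : (copX w t c d x).card = w x := by
  rw [copX, Finset.card_image_of_injective _ (fun m m' hm => ?_), Finset.card_univ,
    Fintype.card_fin]
  exact eq_of_heq (Sigma.mk.inj_iff.1 (Sum.inl.inj hm)).2

@[simp] lemma inl_mem_copS {s : Finset X} {y : X} {m : Fin (w y)} :
    (Sum.inl ⟨y, m⟩ : PT w t c d) ∈ copS w t c d s ↔ y ∈ s := by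
  simp only [copS, Finset.mem_biUnion]
  constructor
  · rintro ⟨x, hx, hm⟩
    rw [(inl_mem_copX w t c d).1 hm]; exact hx
  · intro hy; exact ⟨y, hy, (inl_mem_copX w t c d).2 rfl⟩

@[simp] lemma inr_not_mem_copS {s : Finset X} {q} :
    (Sum.inr q : PT w t c d) ∉ copS w t c d s := by
  simp [copS]

lemma card_copS (s : Finset X) : (copS w t c d s).card = ∑ x ∈ s, w x := by
  rw [copS, Finset.card_biUnion]
  · exact Finset.sum_congr rfl fun x _ => card_copX w t c d x
  · intro x _ y _ hxy
    rw [Function.onFun, Finset.disjoint_left]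
    rintro (⟨z, m⟩ | q) hz hz'
    · exact hxy (((inl_mem_copX w t c d).1 hz).symm.trans ((inl_mem_copX w t c d).1 hz'))
    · exact inr_not_mem_copX w t c d hz
  
@[simp] lemma mem_DS_iff {p : PT w t c d} :
    p ∈ DS w t c d ↔ ∃ m : Fin d, p = Sum.inr (Sum.inr m) := by
  simp only [DS, Finset.mem_image, Finset.mem_univ, true_and]
  constructor
  · rintro ⟨m, rfl⟩; exact ⟨m, rfl⟩
  · rintro ⟨m, rfl⟩; exact ⟨m, rfl⟩

lemma card_DS : (DS w t c d).card = d := by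
  rw [DS, Finset.card_image_of_injective _ (fun m m' hm => by
    simpa using hm), Finset.card_univ, Fintype.card_fin]

@[simp] lemma mem_batchP_iff {j : Fin t} {p : PT w t c d} :
    p ∈ batchP w t c d j ↔ ∃ m : Fin c, p = Sum.inr (Sum.inl (j, m)) := by
  simp only [batchP, Finset.mem_image, Finset.mem_univ, true_and]
  constructor
  · rintro ⟨m, rfl⟩; exact ⟨m, rfl⟩
  · rintro ⟨m, rfl⟩; exact ⟨m, rfl⟩

lemma card_batchP (j : Fin t) : (batchP w t c d j).card = c := by
  rw [batchP, Finset.card_image_of_injective _ (fun m m' hm => by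
    simpa using hm), Finset.card_univ, Fintype.card_fin]

@[simp] lemma locgP_inl (q : Σ x : X, Fin (w x)) :
    locgP w t c d (Sum.inl q) = some q.1 := rfl

@[simp] lemma locgP_inr (q : (Fin t × Fin c) ⊕ Fin d) :
    locgP w t c d (Sum.inr q) = none := rfl

end PTsec

set_option maxHeartbeats 1000000 in
lemma fill_overlay_exists {X : Type*} [Fintype X] [DecidableEq X]
    (w : X → ℕ) (t c d : ℕ) {u g0 : ℕ} (G : Finset X) (hGcard : G.card = u)
    (hwG : ∀ x ∈ G, w x = g0) (hGDD : IsGDD 4 (List.replicate u g0 ++ [d])) :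
    ∃ Bs : Finset (Finset (PT w t c d)), Bs.Nonempty ∧
      (∀ blk ∈ Bs, blk.card = 4 ∧ ∀ p ∈ blk, p ∈ copS w t c d G ∪ DS w t c d) ∧
      (∀ p ∈ copS w t c d G ∪ DS w t c d, ∀ q ∈ copS w t c d G ∪ DS w t c d,
        locgP w t c d p ≠ locgP w t c d q → ∃! blk, blk ∈ Bs ∧ p ∈ blk ∧ q ∈ blk) ∧
      (∀ p q, locgP w t c d p = locgP w t c d q → p ≠ q →
        ∀ blk ∈ Bs, p ∈ blk → q ∉ blk) := by
  classical
  set eG := G.equivFinOfCardEq hGcard with heGdef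
  set S := copS w t c d G ∪ DS w t c d with hSdef
  have hmemS_inl : ∀ (x : X) (m : Fin (w x)), (Sum.inl ⟨x, m⟩ : PT w t c d) ∈ S ↔ x ∈ G := by
    intro x m; rw [hSdef, Finset.mem_union]; simp
  have hmemS_b : ∀ (q : Fin t × Fin c), (Sum.inr (Sum.inl q) : PT w t c d) ∉ S := by
    intro q; rw [hSdef, Finset.mem_union]; push_neg; constructor <;> simp
  have hmemS_d : ∀ (m : Fin d), (Sum.inr (Sum.inr m) : PT w t c d) ∈ S := by
    intro m; rw [hSdef, Finset.mem_union]; right; simp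
  set gl : PT w t c d → Fin (u + 1) :=
    Sum.elim (fun q => if h : q.1 ∈ G then (eG ⟨q.1, h⟩).castSucc else 0)
      (fun _ => Fin.last u) with hgl
  refine overlay_exists (locgP w t c d) hGDD (by simp) S gl ?_ ?_
  · intro jj
    rw [get_repapp1]
    simp only [Fin.coe_cast]
    by_cases hj : (jj : ℕ) < u
    · rw [if_pos hj]
      have hfe : S.filter (fun p => gl p = jj) = copX w t c d (eG.symm ⟨jj, hj⟩).1 := by
        ext p
        simp only [Finset.mem_filter]
        rcases p with (⟨x, m⟩ | (q | m))
        · simp only [hgl, Sum.elim_inl]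
          constructor
          · rintro ⟨hpS, hpg⟩
            have hxG : x ∈ G := (hmemS_inl x m).1 hpS
            rw [dif_pos hxG] at hpg
            have hsub : (⟨x, hxG⟩ : {z // z ∈ G}) = eG.symm ⟨jj, hj⟩ := by
              apply eG.injective
              rw [Equiv.apply_symm_apply]
              apply Fin.ext
              simpa [Fin.coe_castSucc] using congrArg Fin.val hpg
            rw [inl_mem_copX]
            exact congrArg Subtype.val hsub
          · intro hpc
            have hx1 : x = (eG.symm ⟨jj, hj⟩).1 := (inl_mem_copX _ _ _ _).1 hpc
            have hxG : x ∈ G := hx1 ▸ (eG.symm ⟨jj, hj⟩).2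
            refine ⟨(hmemS_inl x m).2 hxG, ?_⟩
            rw [dif_pos hxG]
            have hsub : (⟨x, hxG⟩ : {z // z ∈ G}) = eG.symm ⟨jj, hj⟩ := Subtype.ext hx1
            rw [hsub, Equiv.apply_symm_apply]
            exact Fin.ext rfl
        · constructor
          · rintro ⟨hpS, _⟩; exact absurd hpS (hmemS_b q)
          · intro hpc; exact absurd hpc (inr_not_mem_copX _ _ _ _)
        · simp only [hgl, Sum.elim_inr]
          constructor
          · rintro ⟨_, hpg⟩
            exfalso
            have := congrArg Fin.val hpg
            simp only [Fin.val_last] at this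
            omega
          · intro hpc; exact absurd hpc (inr_not_mem_copX _ _ _ _)
      rw [hfe, card_copX]
      exact hwG _ (eG.symm ⟨jj, hj⟩).2
    · rw [if_neg hj]
      have hjj : jj = Fin.last u := by
        apply Fin.ext
        have := jj.isLt
        simp only [Fin.val_last]
        omega
      have hfe : S.filter (fun p => gl p = jj) = DS w t c d := by
        subst hjj
        ext p
        simp only [Finset.mem_filter]
        rcases p with (⟨x, m⟩ | (q | m))
        · simp only [hgl, Sum.elim_inl]
          constructor
          · rintro ⟨hpS, hpg⟩
            exfalso
            have hxG : x ∈ G := (hmemS_inl x m).1 hpS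
            rw [dif_pos hxG] at hpg
            have hv := congrArg Fin.val hpg
            simp only [Fin.coe_castSucc, Fin.val_last] at hv
            have := (eG ⟨x, hxG⟩).isLt
            omega
          · intro hpc
            exfalso
            rcases (mem_DS_iff w t c d).1 hpc with ⟨m', hm'⟩
            exact Sum.inl_ne_inr hm'
        · constructor
          · rintro ⟨hpS, _⟩; exact absurd hpS (hmemS_b q)
          · intro hpc
            exfalso
            rcases (mem_DS_iff w t c d).1 hpc with ⟨m', hm'⟩
            have := Sum.inr.inj hm'
            exact Sum.inl_ne_inr this
        · constructor
          · rintro ⟨hpS, _⟩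
            exact (mem_DS_iff w t c d).2 ⟨m, rfl⟩
          · intro _
            exact ⟨hmemS_d m, rfl⟩
      rw [hfe, card_DS]
  · intro p hp q hq
    rcases p with (⟨x, m⟩ | (qq | m)) <;> rcases q with (⟨y, m'⟩ | (qq' | m'))
    · have hxG : x ∈ G := (hmemS_inl x m).1 hp
      have hyG : y ∈ G := (hmemS_inl y m').1 hq
      simp only [hgl, Sum.elim_inl, dif_pos hxG, dif_pos hyG, locgP_inl]
      constructor
      · intro h
        have h2 := eG.injective (Fin.castSucc_injective _ h)
        have : x = y := congrArg Subtype.val h2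
        simp [this]
      · intro h
        have hxy : x = y := by simpa using h
        subst hxy
        rfl
    · exact absurd hq (hmemS_b qq')
    · have hxG : x ∈ G := (hmemS_inl x m).1 hp
      simp only [hgl, Sum.elim_inl, Sum.elim_inr, dif_pos hxG, locgP_inl, locgP_inr]
      constructor
      · intro h
        exfalso
        have hv := congrArg Fin.val h
        simp only [Fin.coe_castSucc, Fin.val_last] at hv
        have := (eG ⟨x, hxG⟩).isLt
        omega
      · intro h; exact absurd h (by simp)
    · exact absurd hp (hmemS_b qq)
    · exact absurd hp (hmemS_b qq)
    · exact absurd hp (hmemS_b qq)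
    · have hyG : y ∈ G := (hmemS_inl y m').1 hq
      simp only [hgl, Sum.elim_inl, Sum.elim_inr, dif_pos hyG, locgP_inl, locgP_inr]
      constructor
      · intro h
        exfalso
        have hv := congrArg Fin.val h
        simp only [Fin.coe_castSucc, Fin.val_last] at hv
        have := (eG ⟨y, hyG⟩).isLt
        omega
      · intro h; exact absurd h (by simp)
    · exact absurd hq (hmemS_b qq')
    · simp only [hgl, Sum.elim_inr, locgP_inr]

set_option maxHeartbeats 1000000 in
lemma class_overlay_exists {X : Type*} [Fintype X] [DecidableEq X]
    {v a b : ℕ} (grpX : X → Fin (v + 1)) (w : X → ℕ) (t c d : ℕ)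
    (hw : ∀ x, w x = if (grpX x : ℕ) < v then a else b)
    (bb : Finset X)
    (htr : ∀ i : Fin (v + 1), ∃! x, x ∈ bb ∧ grpX x = i)
    (E : Finset (PT w t c d))
    (hE : ∀ p ∈ E, ∃ q, p = Sum.inr q)
    (hcase : (E.card = c ∧ IsGDD 4 (List.replicate v a ++ [b, c])) ∨
             (E = ∅ ∧ IsGDD 4 (List.replicate v a ++ [b]))) :
    ∃ Bs : Finset (Finset (PT w t c d)), Bs.Nonempty ∧
      (∀ blk ∈ Bs, blk.card = 4 ∧ ∀ p ∈ blk, p ∈ copS w t c d bb ∪ E) ∧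
      (∀ p ∈ copS w t c d bb ∪ E, ∀ q ∈ copS w t c d bb ∪ E,
        locgP w t c d p ≠ locgP w t c d q → ∃! blk, blk ∈ Bs ∧ p ∈ blk ∧ q ∈ blk) ∧
      (∀ p q, locgP w t c d p = locgP w t c d q → p ≠ q →
        ∀ blk ∈ Bs, p ∈ blk → q ∉ blk) := by
  classical
  have hinjbb : ∀ x ∈ bb, ∀ y ∈ bb, grpX x = grpX y → x = y := by
    intro x hx y hy hxy
    exact (htr (grpX y)).unique ⟨hx, hxy⟩ ⟨hy, rfl⟩
  set S := copS w t c d bb ∪ E with hSdef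
  have hmemS_inl : ∀ (x : X) (m : Fin (w x)), (Sum.inl ⟨x, m⟩ : PT w t c d) ∈ S ↔ x ∈ bb := by
    intro x m
    rw [hSdef, Finset.mem_union]
    constructor
    · rintro (h | h)
      · exact (inl_mem_copS w t c d).1 h
      · obtain ⟨q, hq⟩ := hE _ h
        exact absurd hq (by simp)
    · intro h; exact Or.inl ((inl_mem_copS w t c d).2 h)
  have hmemS_inr : ∀ (q : (Fin t × Fin c) ⊕ Fin d),
      ((Sum.inr q : PT w t c d) ∈ S ↔ (Sum.inr q : PT w t c d) ∈ E) := by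
    intro q
    rw [hSdef, Finset.mem_union]
    constructor
    · rintro (h | h)
      · exact absurd h (inr_not_mem_copS w t c d)
      · exact h
    · exact Or.inr
  rcases hcase with ⟨hEcard, hGDD⟩ | ⟨hEempty, hGDD⟩
  · -- with a batch of c new points; groups a^v b^1 c^1
    set gl : PT w t c d → Fin (v + 2) :=
      Sum.elim (fun q => (grpX q.1).castSucc) (fun _ => Fin.last (v + 1)) with hgl
    refine overlay_exists (locgP w t c d) hGDD (by simp) S gl ?_ ?_
    · intro jj
      rw [get_repapp2]
      simp only [Fin.coe_cast]
      by_cases hj : (jj : ℕ) < v + 1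
      · obtain ⟨x1, ⟨hx1bb, hx1g⟩, hx1u⟩ := htr ⟨(jj : ℕ), hj⟩
        have hfe : S.filter (fun p => gl p = jj) = copX w t c d x1 := by
          ext p
          simp only [Finset.mem_filter]
          rcases p with (⟨x, m⟩ | q)
          · simp only [hgl, Sum.elim_inl]
            constructor
            · rintro ⟨hpS, hpg⟩
              have hxbb : x ∈ bb := (hmemS_inl x m).1 hpS
              have hgx : grpX x = ⟨(jj : ℕ), hj⟩ := by
                apply Fin.ext
                simpa [Fin.coe_castSucc] using congrArg Fin.val hpg
              rw [inl_mem_copX]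
              exact hx1u x ⟨hxbb, hgx⟩
            · intro hpc
              have hx1' : x = x1 := (inl_mem_copX _ _ _ _).1 hpc
              subst hx1'
              refine ⟨(hmemS_inl x m).2 hx1bb, ?_⟩
              apply Fin.ext
              simp [Fin.coe_castSucc, hx1g]
          · simp only [hgl, Sum.elim_inr]
            constructor
            · rintro ⟨_, hpg⟩
              exfalso
              have := congrArg Fin.val hpg
              simp only [Fin.val_last] at this
              omega
            · intro hpc; exact absurd hpc (inr_not_mem_copX _ _ _ _)
        rw [hfe, card_copX, hw x1, hx1g]
        by_cases hv' : (jj : ℕ) < v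
        · rw [if_pos hv', if_pos hv']
        · rw [if_neg hv', if_neg hv', if_pos (by omega : (jj : ℕ) = v)]
      · have hjj : (jj : ℕ) = v + 1 := by have := jj.isLt; omega
        have hfe : S.filter (fun p => gl p = jj) = E := by
          ext p
          simp only [Finset.mem_filter]
          rcases p with (⟨x, m⟩ | q)
          · simp only [hgl, Sum.elim_inl]
            constructor
            · rintro ⟨_, hpg⟩
              exfalso
              have := congrArg Fin.val hpg
              simp only [Fin.coe_castSucc] at this
              have := (grpX x).isLt
              omega
            · intro hpc
              obtain ⟨q, hq⟩ := hE _ hpc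
              exact absurd hq (by simp)
          · simp only [hgl, Sum.elim_inr]
            constructor
            · rintro ⟨hpS, _⟩
              exact (hmemS_inr q).1 hpS
            · intro hpc
              refine ⟨(hmemS_inr q).2 hpc, ?_⟩
              apply Fin.ext
              simp [Fin.val_last, hjj]
        rw [hfe, hEcard, if_neg (by omega), if_neg (by omega)]
    · intro p hp q hq
      rcases p with (⟨x, m⟩ | qq) <;> rcases q with (⟨y, m'⟩ | qq')
      · have hxbb : x ∈ bb := (hmemS_inl x m).1 hp
        have hybb : y ∈ bb := (hmemS_inl y m').1 hq
        simp only [hgl, Sum.elim_inl, locgP_inl]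
        constructor
        · intro h
          have hg : grpX x = grpX y := Fin.castSucc_injective _ h
          have : x = y := hinjbb x hxbb y hybb hg
          simp [this]
        · intro h
          have hxy : x = y := by simpa using h
          subst hxy
          rfl
      · simp only [hgl, Sum.elim_inl, Sum.elim_inr, locgP_inl, locgP_inr]
        constructor
        · intro h
          exfalso
          have := congrArg Fin.val h
          simp only [Fin.coe_castSucc, Fin.val_last] at this
          have := (grpX x).isLt
          omega
        · intro h; exact absurd h (by simp)
      · simp only [hgl, Sum.elim_inl, Sum.elim_inr, locgP_inl, locgP_inr]
        constructor
        · intro h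
          exfalso
          have := congrArg Fin.val h
          simp only [Fin.coe_castSucc, Fin.val_last] at this
          have := (grpX y).isLt
          omega
        · intro h; exact absurd h (by simp)
      · simp only [hgl, Sum.elim_inr, locgP_inr]
  · -- no new points; groups a^v b^1
    subst hEempty
    set gl : PT w t c d → Fin (v + 1) :=
      Sum.elim (fun q => grpX q.1) (fun _ => ⟨0, by omega⟩) with hgl
    refine overlay_exists (locgP w t c d) hGDD (by simp) S gl ?_ ?_
    · intro jj
      rw [get_repapp1]
      simp only [Fin.coe_cast]
      obtain ⟨x1, ⟨hx1bb, hx1g⟩, hx1u⟩ := htr jj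
      have hfe : S.filter (fun p => gl p = jj) = copX w t c d x1 := by
        ext p
        simp only [Finset.mem_filter]
        rcases p with (⟨x, m⟩ | q)
        · simp only [hgl, Sum.elim_inl]
          constructor
          · rintro ⟨hpS, hpg⟩
            have hxbb : x ∈ bb := (hmemS_inl x m).1 hpS
            rw [inl_mem_copX]
            exact hx1u x ⟨hxbb, hpg⟩
          · intro hpc
            have hx1' : x = x1 := (inl_mem_copX _ _ _ _).1 hpc
            subst hx1'
            exact ⟨(hmemS_inl x m).2 hx1bb, hx1g⟩
        · constructor
          · rintro ⟨hpS, _⟩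
            exact absurd ((hmemS_inr q).1 hpS) (Finset.notMem_empty _)
          · intro hpc; exact absurd hpc (inr_not_mem_copX _ _ _ _)
      rw [hfe, card_copX, hw x1, hx1g]
    · intro p hp q hq
      rcases p with (⟨x, m⟩ | qq) <;> rcases q with (⟨y, m'⟩ | qq')
      · have hxbb : x ∈ bb := (hmemS_inl x m).1 hp
        have hybb : y ∈ bb := (hmemS_inl y m').1 hq
        simp only [hgl, Sum.elim_inl, locgP_inl]
        constructor
        · intro h
          have : x = y := hinjbb x hxbb y hybb h
          simp [this]
        · intro h
          have hxy : x = y := by simpa using h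
          subst hxy
          rfl
      · exact absurd ((hmemS_inr qq').1 hq) (Finset.notMem_empty _)
      · exact absurd ((hmemS_inr qq).1 hp) (Finset.notMem_empty _)
      · exact absurd ((hmemS_inr qq).1 hp) (Finset.notMem_empty _)

set_option maxHeartbeats 1000000 in
theorem main_aux (a b c d t u v : ℕ) (hv2 : 2 ≤ v) (hvu : v + 1 ≤ u) (htu : t ≤ u - 1)
    {X : Type*} [Fintype X] [DecidableEq X]
    (grpX : X → Fin (v + 1)) (B0 : Finset (Finset X)) (col : Finset X → ℕ)
    (hB0ne : B0.Nonempty)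
    (hcnt : ∀ i, (Finset.univ.filter fun x => grpX x = i).card = u)
    (hbs : ∀ bb ∈ B0, bb.card = v + 1)
    (hcov : ∀ x y, grpX x ≠ grpX y → ∃! bb, bb ∈ B0 ∧ x ∈ bb ∧ y ∈ bb)
    (hexc : ∀ x y, x ≠ y → grpX x = grpX y → ∀ bb ∈ B0, x ∈ bb → y ∉ bb)
    (hres : ∀ x, ∀ bb ∈ B0, ∃! b', b' ∈ B0 ∧ col b' = col bb ∧ x ∈ b')
    (had : IsGDD 4 (List.replicate u a ++ [d]))
    (hbd : IsGDD 4 (List.replicate u b ++ [d]))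
    (habc : 0 < t * c → IsGDD 4 (List.replicate v a ++ [b, c]))
    (hab : c = 0 ∨ t < u - 1 → IsGDD 4 (List.replicate v a ++ [b])) :
    IsGDD 4 (List.replicate u (v * a + b) ++ [c * t + d]) := by
  classical
  have hu3 : 3 ≤ u := by omega
  -- blocks are transversals
  have hinj : ∀ bb ∈ B0, ∀ x ∈ bb, ∀ y ∈ bb, grpX x = grpX y → x = y := by
    intro bb hb x hx y hy hxy
    by_contra hne
    exact hexc x y hne hxy bb hb hx hy
  have htrans : ∀ bb ∈ B0, ∀ i : Fin (v + 1), ∃! x, x ∈ bb ∧ grpX x = i := by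
    intro bb hb i
    have himg : bb.image grpX = Finset.univ := by
      apply Finset.eq_univ_of_card
      rw [Finset.card_image_of_injOn (fun x hx y hy => hinj bb hb x hx y hy), hbs bb hb]
      simp
    have hmem : i ∈ bb.image grpX := by rw [himg]; exact Finset.mem_univ i
    obtain ⟨x, hx, hxi⟩ := Finset.mem_image.1 hmem
    exact ⟨x, ⟨hx, hxi⟩, fun y ⟨hy, hyi⟩ => hinj bb hb y hy x hx (hyi.trans hxi.symm)⟩
  obtain ⟨b0, hb0⟩ := hB0ne
  set C0 : Finset (Finset X) := B0.filter (fun bb => col bb = col b0) with hC0def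
  have hC0sub : ∀ bb ∈ C0, bb ∈ B0 := fun bb hbb => (Finset.mem_filter.1 hbb).1
  choose R hR1 hR2 hR3 using fun x => (hres x b0 hb0).exists
  have hRu : ∀ x bb, bb ∈ B0 → col bb = col b0 → x ∈ bb → bb = R x := by
    intro x bb h1 h2 h3
    exact (hres x b0 hb0).unique ⟨h1, h2, h3⟩ ⟨hR1 x, hR2 x, hR3 x⟩
  have hRC0 : ∀ x, R x ∈ C0 := fun x => Finset.mem_filter.2 ⟨hR1 x, hR2 x⟩
  have hmemR : ∀ (x : X) (bb : Finset X), bb ∈ C0 → (x ∈ bb ↔ R x = bb) := by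
    intro x bb hbb
    constructor
    · intro hx; exact (hRu x bb (hC0sub bb hbb) (Finset.mem_filter.1 hbb).2 hx).symm
    · rintro rfl; exact hR3 x
  have hXcard : Fintype.card X = (v + 1) * u := by
    rw [← Finset.card_univ,
      Finset.card_eq_sum_card_fiberwise (f := grpX) (t := Finset.univ) (fun x _ => Finset.mem_univ _)]
    rw [Finset.sum_congr rfl (fun i _ => hcnt i), Finset.sum_const, Finset.card_univ,
      Fintype.card_fin, smul_eq_mul]
  have hC0card : C0.card = u := by
    have hdis : ∀ b1 ∈ C0, ∀ b2 ∈ C0, b1 ≠ b2 → Disjoint b1 b2 := by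
      intro b1 h1 b2 h2 h12
      rw [Finset.disjoint_left]
      intro y hy1 hy2
      exact h12 (((hmemR y b1 h1).1 hy1).symm.trans ((hmemR y b2 h2).1 hy2))
    have huniv : (Finset.univ : Finset X) = C0.biUnion id := by
      ext y
      simp only [Finset.mem_univ, true_iff, Finset.mem_biUnion, id]
      exact ⟨R y, hRC0 y, hR3 y⟩
    have hkey : (v + 1) * u = C0.card * (v + 1) := by
      calc (v + 1) * u = Fintype.card X := hXcard.symm
        _ = (Finset.univ : Finset X).card := (Finset.card_univ).symm
        _ = (C0.biUnion id).card := by rw [huniv]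
        _ = ∑ bb ∈ C0, bb.card := Finset.card_biUnion hdis
        _ = ∑ _bb ∈ C0, (v + 1) :=
              Finset.sum_congr rfl (fun bb hbb => hbs bb (hC0sub bb hbb))
        _ = C0.card * (v + 1) := by rw [Finset.sum_const, smul_eq_mul]
    have := Nat.eq_of_mul_eq_mul_right (show 0 < v + 1 by omega)
      (show u * (v + 1) = C0.card * (v + 1) by rw [← hkey]; ring)
    omega
  -- number of colours
  have hXne : Nonempty X := by
    rw [← Fintype.card_pos_iff, hXcard]
    exact Nat.mul_pos (by omega) (by omega)
  obtain ⟨x0⟩ := hXne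
  have hTcard : (B0.filter (fun bb => x0 ∈ bb)).card = u := by
    set T := B0.filter (fun bb => x0 ∈ bb) with hTdef
    have hdis : ∀ b1 ∈ T, ∀ b2 ∈ T, b1 ≠ b2 → Disjoint (b1.erase x0) (b2.erase x0) := by
      intro b1 h1 b2 h2 h12
      rw [Finset.disjoint_left]
      intro y hy1 hy2
      obtain ⟨hyne1, hy1'⟩ := Finset.mem_erase.1 hy1
      obtain ⟨_, hy2'⟩ := Finset.mem_erase.1 hy2
      obtain ⟨hb1, hx01⟩ := Finset.mem_filter.1 h1
      obtain ⟨hb2, hx02⟩ := Finset.mem_filter.1 h2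
      have hgy : grpX y ≠ grpX x0 := by
        intro hg
        exact hexc y x0 hyne1 hg b1 hb1 hy1' hx01
      obtain ⟨bb, _, hbu⟩ := hcov y x0 hgy
      exact h12 ((hbu b1 ⟨hb1, hy1', hx01⟩).trans (hbu b2 ⟨hb2, hy2', hx02⟩).symm)
    have hun : Finset.univ.filter (fun y => ¬ grpX y = grpX x0) = T.biUnion (fun bb => bb.erase x0) := by
      ext y
      simp only [Finset.mem_filter, Finset.mem_univ, true_and, Finset.mem_biUnion]
      constructor
      · intro hgy
        obtain ⟨bb, ⟨hbb, hybb, hx0bb⟩, _⟩ := hcov y x0 hgy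
        refine ⟨bb, Finset.mem_filter.2 ⟨hbb, hx0bb⟩, Finset.mem_erase.2 ⟨?_, hybb⟩⟩
        rintro rfl; exact hgy rfl
      · rintro ⟨bb, hbbT, hy⟩
        obtain ⟨hyne, hybb⟩ := Finset.mem_erase.1 hy
        obtain ⟨hbb, hx0bb⟩ := Finset.mem_filter.1 hbbT
        intro hg
        exact hexc y x0 hyne hg bb hbb hybb hx0bb
    have hcnt2 : (Finset.univ.filter (fun y => ¬ grpX y = grpX x0)).card = v * u := by
      have htot := Finset.card_filter_add_card_filter_not
        (s := (Finset.univ : Finset X)) (p := fun y => grpX y = grpX x0)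
      rw [hcnt (grpX x0), Finset.card_univ, hXcard] at htot
      have hvu1 : (v + 1) * u = v * u + u := by ring
      omega
    have hsum : ∑ bb ∈ T, (bb.erase x0).card = T.card * v := by
      rw [Finset.sum_congr rfl (fun bb hbb => ?_), Finset.sum_const, smul_eq_mul]
      rw [Finset.card_erase_of_mem (Finset.mem_filter.1 hbb).2, hbs bb (Finset.mem_filter.1 hbb).1]
      omega
    have hkey : T.card * v = v * u := by
      rw [← hsum, ← Finset.card_biUnion hdis, ← hun, hcnt2]
    have := Nat.eq_of_mul_eq_mul_right (show 0 < v by omega)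
      (show T.card * v = u * v by rw [hkey]; ring)
    omega
  set CU : Finset ℕ := B0.image col with hCUdef
  have hCUcard : CU.card = u := by
    rw [← hTcard]
    symm
    apply Finset.card_bij (fun bb _ => col bb)
    · intro bb hbb
      exact Finset.mem_image_of_mem col (Finset.mem_filter.1 hbb).1
    · intro b1 h1 b2 h2 hcol
      obtain ⟨hb1, hx01⟩ := Finset.mem_filter.1 h1
      obtain ⟨hb2, hx02⟩ := Finset.mem_filter.1 h2
      exact (hres x0 b2 hb2).unique ⟨hb1, hcol, hx01⟩ ⟨hb2, rfl, hx02⟩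
    · intro s hs
      obtain ⟨bb1, hbb1, rfl⟩ := Finset.mem_image.1 hs
      obtain ⟨b', ⟨hb', hcol', hx0'⟩, _⟩ := hres x0 bb1 hbb1
      exact ⟨b', Finset.mem_filter.2 ⟨hb', hx0'⟩, hcol'⟩
  set CE : Finset ℕ := CU.erase (col b0) with hCEdef
  have hCEcard : CE.card = u - 1 := by
    rw [hCEdef, Finset.card_erase_of_mem (Finset.mem_image_of_mem col hb0), hCUcard]
  set ψ := CE.equivFinOfCardEq hCEcard with hψdef
  have hNRcol : ∀ bb, bb ∈ B0 → col bb ≠ col b0 → col bb ∈ CE := by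
    intro bb h1 h2; exact Finset.mem_erase.2 ⟨h2, Finset.mem_image_of_mem col h1⟩
  set idxF : Finset X → Fin (u - 1) := fun bb =>
    if h : bb ∈ B0 ∧ col bb ≠ col b0 then ψ ⟨col bb, hNRcol bb h.1 h.2⟩ else ⟨0, by omega⟩
    with hidxFdef
  have hidx_val : ∀ bb (h1 : bb ∈ B0) (h2 : col bb ≠ col b0),
      idxF bb = ψ ⟨col bb, hNRcol bb h1 h2⟩ := by
    intro bb h1 h2
    simp only [hidxFdef]
    exact dif_pos ⟨h1, h2⟩
  have hidx_eq : ∀ b1 b2, b1 ∈ B0 → col b1 ≠ col b0 → b2 ∈ B0 → col b2 ≠ col b0 →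
      idxF b1 = idxF b2 → col b1 = col b2 := by
    intro b1 b2 h1 h2 h3 h4 he
    rw [hidx_val b1 h1 h2, hidx_val b2 h3 h4] at he
    have := ψ.injective he
    exact congrArg Subtype.val this
  have hcol_of_idx : ∀ (j : Fin (u - 1)), ∃ s, s ∈ CE ∧
      ∀ bb, bb ∈ B0 → col bb ≠ col b0 → col bb = s → idxF bb = j := by
    intro j
    refine ⟨(ψ.symm j).1, (ψ.symm j).2, ?_⟩
    intro bb h1 h2 h3
    rw [hidx_val bb h1 h2]
    have : (⟨col bb, hNRcol bb h1 h2⟩ : {s // s ∈ CE}) = ψ.symm j := Subtype.ext h3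
    rw [this, Equiv.apply_symm_apply]
  -- weights
  set w : X → ℕ := fun x => if (grpX x : ℕ) < v then a else b with hwdef
  have hw : ∀ x, w x = if (grpX x : ℕ) < v then a else b := fun x => rfl
  -- filling overlays
  have hfill : ∀ i : Fin (v + 1), ∃ Bs : Finset (Finset (PT w t c d)), Bs.Nonempty ∧
      (∀ blk ∈ Bs, blk.card = 4 ∧ ∀ p ∈ blk,
        p ∈ copS w t c d (Finset.univ.filter fun z => grpX z = i) ∪ DS w t c d) ∧
      (∀ p ∈ copS w t c d (Finset.univ.filter fun z => grpX z = i) ∪ DS w t c d,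
       ∀ q ∈ copS w t c d (Finset.univ.filter fun z => grpX z = i) ∪ DS w t c d,
        locgP w t c d p ≠ locgP w t c d q → ∃! blk, blk ∈ Bs ∧ p ∈ blk ∧ q ∈ blk) ∧
      (∀ p q, locgP w t c d p = locgP w t c d q → p ≠ q →
        ∀ blk ∈ Bs, p ∈ blk → q ∉ blk) := by
    intro i
    apply fill_overlay_exists w t c d (Finset.univ.filter fun z => grpX z = i) (hcnt i)
      (g0 := if (i : ℕ) < v then a else b)
      (fun x hx => by rw [hw x, (Finset.mem_filter.1 hx).2])
    by_cases h : (i : ℕ) < v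
    · rw [if_pos h]; exact had
    · rw [if_neg h]; exact hbd
  choose Bfill hf1 hf2 hf3 hf4 using hfill
  -- batches
  set Ebb : Finset X → Finset (PT w t c d) := fun bb =>
    if h : (idxF bb : ℕ) < t then batchP w t c d ⟨(idxF bb : ℕ), h⟩ else ∅ with hEdef
  have hEinr : ∀ bb, ∀ p ∈ Ebb bb, ∃ q, p = Sum.inr q := by
    intro bb p hp
    simp only [hEdef] at hp
    split at hp
    · obtain ⟨m, rfl⟩ := (mem_batchP_iff w t c d).1 hp
      exact ⟨_, rfl⟩
    · exact absurd hp (Finset.notMem_empty _)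
  have hEbatchmem : ∀ bb (j : Fin t) (m : Fin c),
      ((Sum.inr (Sum.inl (j, m)) : PT w t c d) ∈ Ebb bb ↔ (j : ℕ) = (idxF bb : ℕ)) := by
    intro bb j m
    simp only [hEdef]
    split
    · next h =>
      rw [mem_batchP_iff]
      constructor
      · rintro ⟨m', hm⟩
        have h2 := Sum.inl.inj (Sum.inr.inj hm)
        have hjeq : j = ⟨(idxF bb : ℕ), h⟩ := (Prod.mk.injEq _ _ _ _ ▸ h2).1
        exact congrArg Fin.val hjeq
      · intro hj
        refine ⟨m, ?_⟩
        have hjeq : j = ⟨(idxF bb : ℕ), h⟩ := Fin.ext hj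
        rw [hjeq]
    · next h =>
      constructor
      · intro hp; exact absurd hp (Finset.notMem_empty _)
      · intro hj; exact absurd (hj ▸ j.isLt) h
  have hEdnot : ∀ bb (m : Fin d), (Sum.inr (Sum.inr m) : PT w t c d) ∉ Ebb bb := by
    intro bb m hp
    obtain ⟨q, hq⟩ := hEinr bb _ hp
    simp only [hEdef] at hp
    split at hp
    · obtain ⟨m', hm'⟩ := (mem_batchP_iff w t c d).1 hp
      exact Sum.inr_ne_inl (Sum.inr.inj hm')
    · exact absurd hp (Finset.notMem_empty _)
  -- class overlays
  have hcls : ∀ bb, bb ∈ B0 → ¬ col bb = col b0 →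
      ∃ Bs : Finset (Finset (PT w t c d)), Bs.Nonempty ∧
      (∀ blk ∈ Bs, blk.card = 4 ∧ ∀ p ∈ blk, p ∈ copS w t c d bb ∪ Ebb bb) ∧
      (∀ p ∈ copS w t c d bb ∪ Ebb bb, ∀ q ∈ copS w t c d bb ∪ Ebb bb,
        locgP w t c d p ≠ locgP w t c d q → ∃! blk, blk ∈ Bs ∧ p ∈ blk ∧ q ∈ blk) ∧
      (∀ p q, locgP w t c d p = locgP w t c d q → p ≠ q →
        ∀ blk ∈ Bs, p ∈ blk → q ∉ blk) := by
    intro bb hbb hcolbb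
    apply class_overlay_exists grpX w t c d hw bb (fun i => htrans bb hbb i) (Ebb bb) (hEinr bb)
    by_cases hct : (idxF bb : ℕ) < t ∧ 0 < c
    · left
      constructor
      · simp only [hEdef]
        rw [dif_pos hct.1]
        exact card_batchP w t c d _
      · exact habc (Nat.mul_pos (by omega) hct.2)
    · right
      have hEe : Ebb bb = ∅ := by
        simp only [hEdef]
        by_cases h : (idxF bb : ℕ) < t
        · rw [dif_pos h]
          have hc0 : c = 0 := by omega
          apply Finset.card_eq_zero.1
          rw [card_batchP]
          exact hc0
        · rw [dif_neg h]
      refine ⟨hEe, hab ?_⟩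
      by_cases hc0 : c = 0
      · exact Or.inl hc0
      · right
        have h1 : ¬ (idxF bb : ℕ) < t := fun h => hct ⟨h, Nat.pos_of_ne_zero hc0⟩
        have h2 := (idxF bb).isLt
        omega
  choose! Bcls hc1 hc2 hc3 hc4 using hcls
  -- assembled design
  set e0 := C0.equivFinOfCardEq hC0card with he0def
  set grpF : PT w t c d → Fin (u + 1) :=
    Sum.elim (fun q => (e0 ⟨R q.1, hRC0 q.1⟩).castSucc) (fun _ => Fin.last u) with hgrpFdef
  set Bfin := (Finset.univ.biUnion Bfill) ∪
      ((B0.filter (fun bb => ¬ col bb = col b0)).biUnion Bcls) with hBfindef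
  have hmemfill : ∀ (i : Fin (v + 1)) blk, blk ∈ Bfill i → blk ∈ Bfin := by
    intro i blk h
    rw [hBfindef]
    exact Finset.mem_union_left _ (Finset.mem_biUnion.2 ⟨i, Finset.mem_univ _, h⟩)
  have hmemcls : ∀ bb blk, bb ∈ B0 → ¬ col bb = col b0 → blk ∈ Bcls bb → blk ∈ Bfin := by
    intro bb blk h1 h2 h
    rw [hBfindef]
    exact Finset.mem_union_right _ (Finset.mem_biUnion.2 ⟨bb, Finset.mem_filter.2 ⟨h1, h2⟩, h⟩)
  have hlocate : ∀ blk ∈ Bfin, (∃ i, blk ∈ Bfill i) ∨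
      (∃ bb, bb ∈ B0 ∧ ¬ col bb = col b0 ∧ blk ∈ Bcls bb) := by
    intro blk h
    rw [hBfindef, Finset.mem_union] at h
    rcases h with h | h
    · obtain ⟨i, _, hi⟩ := Finset.mem_biUnion.1 h
      exact Or.inl ⟨i, hi⟩
    · obtain ⟨bb, hbb, hi⟩ := Finset.mem_biUnion.1 h
      obtain ⟨h1, h2⟩ := Finset.mem_filter.1 hbb
      exact Or.inr ⟨bb, h1, h2, hi⟩
  -- membership facts for overlay point sets
  have hSfill_inl : ∀ (i : Fin (v + 1)) (x : X) (m : Fin (w x)),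
      ((Sum.inl ⟨x, m⟩ : PT w t c d) ∈
        copS w t c d (Finset.univ.filter fun z => grpX z = i) ∪ DS w t c d ↔ grpX x = i) := by
    intro i x m
    rw [Finset.mem_union]
    constructor
    · rintro (h | h)
      · exact (Finset.mem_filter.1 ((inl_mem_copS w t c d).1 h)).2
      · obtain ⟨m', hm'⟩ := (mem_DS_iff w t c d).1 h
        exact absurd hm' (by simp)
    · intro h
      exact Or.inl ((inl_mem_copS w t c d).2 (Finset.mem_filter.2 ⟨Finset.mem_univ _, h⟩))
  have hSfill_b : ∀ (i : Fin (v + 1)) (q : Fin t × Fin c),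
      (Sum.inr (Sum.inl q) : PT w t c d) ∉
        copS w t c d (Finset.univ.filter fun z => grpX z = i) ∪ DS w t c d := by
    intro i q h
    rw [Finset.mem_union] at h
    rcases h with h | h
    · exact inr_not_mem_copS w t c d h
    · obtain ⟨m', hm'⟩ := (mem_DS_iff w t c d).1 h
      exact Sum.inl_ne_inr (Sum.inr.inj hm')
  have hSfill_d : ∀ (i : Fin (v + 1)) (m : Fin d),
      (Sum.inr (Sum.inr m) : PT w t c d) ∈
        copS w t c d (Finset.univ.filter fun z => grpX z = i) ∪ DS w t c d :=
    fun i m => Finset.mem_union_right _ ((mem_DS_iff w t c d).2 ⟨m, rfl⟩)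
  have hScls_inl : ∀ (bb : Finset X) (x : X) (m : Fin (w x)),
      ((Sum.inl ⟨x, m⟩ : PT w t c d) ∈ copS w t c d bb ∪ Ebb bb ↔ x ∈ bb) := by
    intro bb x m
    rw [Finset.mem_union]
    constructor
    · rintro (h | h)
      · exact (inl_mem_copS w t c d).1 h
      · obtain ⟨q, hq⟩ := hEinr bb _ h
        exact absurd hq (by simp)
    · intro h; exact Or.inl ((inl_mem_copS w t c d).2 h)
  have hScls_b : ∀ (bb : Finset X) (j : Fin t) (mc : Fin c),
      ((Sum.inr (Sum.inl (j, mc)) : PT w t c d) ∈ copS w t c d bb ∪ Ebb bb ↔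
        (j : ℕ) = (idxF bb : ℕ)) := by
    intro bb j mc
    rw [Finset.mem_union]
    constructor
    · rintro (h | h)
      · exact absurd h (inr_not_mem_copS w t c d)
      · exact (hEbatchmem bb j mc).1 h
    · intro h; exact Or.inr ((hEbatchmem bb j mc).2 h)
  have hScls_d : ∀ (bb : Finset X) (m : Fin d),
      (Sum.inr (Sum.inr m) : PT w t c d) ∉ copS w t c d bb ∪ Ebb bb := by
    intro bb m h
    rw [Finset.mem_union] at h
    rcases h with h | h
    · exact inr_not_mem_copS w t c d h
    · exact hEdnot bb m h
  -- grpF facts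
  have hgF_inl_iff : ∀ (x y : X) (mx : Fin (w x)) (my : Fin (w y)),
      (grpF (Sum.inl ⟨x, mx⟩) = grpF (Sum.inl ⟨y, my⟩) ↔ R x = R y) := by
    intro x y mx my
    simp only [hgrpFdef, Sum.elim_inl]
    constructor
    · intro h
      exact congrArg Subtype.val (e0.injective (Fin.castSucc_injective _ h))
    · intro h
      have hsub : (⟨R x, hRC0 x⟩ : {z // z ∈ C0}) = ⟨R y, hRC0 y⟩ := Subtype.ext h
      rw [hsub]
  have hgF_inl_ne_inr : ∀ (x : X) (mx : Fin (w x)) (q : (Fin t × Fin c) ⊕ Fin d),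
      grpF (Sum.inl ⟨x, mx⟩) ≠ grpF (Sum.inr q) := by
    intro x mx q h
    simp only [hgrpFdef, Sum.elim_inl, Sum.elim_inr] at h
    have hv := congrArg Fin.val h
    simp only [Fin.coe_castSucc, Fin.val_last] at hv
    have := (e0 ⟨R x, hRC0 x⟩).isLt
    omega
  have hgF_inr : ∀ (q q' : (Fin t × Fin c) ⊕ Fin d),
      grpF (Sum.inr q) = grpF (Sum.inr q' : PT w t c d) := fun q q' => rfl
  -- final assembly
  apply GDDb.toIsGDD
    (hn := (by simp : (List.replicate u (v * a + b) ++ [c * t + d]).length = u + 1))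
    grpF Bfin
  · obtain ⟨blk, hblk⟩ := hf1 ⟨0, by omega⟩
    exact ⟨blk, hmemfill _ blk hblk⟩
  · -- group counts
    intro jj
    rw [get_repapp1]
    simp only [Fin.coe_cast]
    by_cases hj : (jj : ℕ) < u
    · rw [if_pos hj]
      have hbjC0 : ((e0.symm ⟨(jj : ℕ), hj⟩).1 : Finset X) ∈ C0 := (e0.symm ⟨_, hj⟩).2
      have hfe : (Finset.univ.filter fun p : PT w t c d => grpF p = jj)
          = copS w t c d (e0.symm ⟨(jj : ℕ), hj⟩).1 := by
        ext p
        simp only [Finset.mem_filter, Finset.mem_univ, true_and]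
        rcases p with (⟨x, m⟩ | q)
        · simp only [hgrpFdef, Sum.elim_inl]
          rw [inl_mem_copS, hmemR x _ hbjC0]
          constructor
          · intro h
            have h3 : e0 ⟨R x, hRC0 x⟩ = ⟨(jj : ℕ), hj⟩ := by
              apply Fin.ext
              simpa [Fin.coe_castSucc] using congrArg Fin.val h
            have h4 : (⟨R x, hRC0 x⟩ : {z // z ∈ C0}) = e0.symm ⟨(jj : ℕ), hj⟩ := by
              rw [← h3, Equiv.symm_apply_apply]
            exact congrArg Subtype.val h4
          · intro h
            have h4 : (⟨R x, hRC0 x⟩ : {z // z ∈ C0}) = e0.symm ⟨(jj : ℕ), hj⟩ := Subtype.ext h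
            rw [h4, Equiv.apply_symm_apply]
            exact Fin.ext rfl
        · simp only [hgrpFdef, Sum.elim_inr]
          constructor
          · intro h
            exfalso
            have := congrArg Fin.val h
            simp only [Fin.val_last] at this
            omega
          · intro h; exact absurd h (inr_not_mem_copS w t c d)
      rw [hfe, card_copS]
      have hsum : ∑ x ∈ (e0.symm ⟨(jj : ℕ), hj⟩).1, w x
          = ∑ i : Fin (v + 1), (if (i : ℕ) < v then a else b) := by
        apply Finset.sum_bij (i := fun x _ => grpX x)
        · intro x _; exact Finset.mem_univ _
        · intro x hx y hy hxy
          exact hinj _ (hC0sub _ hbjC0) x hx y hy hxy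
        · intro i _
          obtain ⟨x, ⟨hx, hgx⟩, _⟩ := htrans _ (hC0sub _ hbjC0) i
          exact ⟨x, hx, hgx⟩
        · intro x _
          exact hw x
      rw [hsum, Fin.sum_univ_castSucc]
      simp only [Fin.coe_castSucc, Fin.val_last]
      rw [if_neg (lt_irrefl v),
        Finset.sum_congr rfl (fun i _ => if_pos i.isLt), Finset.sum_const,
        Finset.card_univ, Fintype.card_fin, smul_eq_mul]
    · rw [if_neg hj]
      have hjj : jj = Fin.last u := by
        apply Fin.ext
        have := jj.isLt
        simp only [Fin.val_last]
        omega
      subst hjj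
      have hfe : (Finset.univ.filter fun p : PT w t c d => grpF p = Fin.last u)
          = Finset.univ.image (fun q : (Fin t × Fin c) ⊕ Fin d => (Sum.inr q : PT w t c d)) := by
        ext p
        simp only [Finset.mem_filter, Finset.mem_univ, true_and, Finset.mem_image]
        rcases p with (⟨x, m⟩ | q)
        · simp only [hgrpFdef, Sum.elim_inl]
          constructor
          · intro h
            exfalso
            have := congrArg Fin.val h
            simp only [Fin.coe_castSucc, Fin.val_last] at this
            have := (e0 ⟨R x, hRC0 x⟩).isLt
            omega
          · rintro ⟨q, hq⟩
            exact absurd hq Sum.inr_ne_inl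
        · simp only [hgrpFdef, Sum.elim_inr]
          exact ⟨fun _ => ⟨q, rfl⟩, fun _ => trivial⟩
      rw [hfe, Finset.card_image_of_injective _ (fun q1 q2 h => Sum.inr.inj h),
        Finset.card_univ]
      simp only [Fintype.card_sum, Fintype.card_prod, Fintype.card_fin]
      ring
  · refine ⟨?_, ?_, ?_⟩
    · -- block sizes
      intro blk hblk
      rcases hlocate blk hblk with ⟨i, hi⟩ | ⟨bb, h1, h2, hi⟩
      · exact (hf2 i blk hi).1
      · exact (hc2 bb h1 h2 blk hi).1
    · -- cover
      have symmEx : ∀ p q : PT w t c d,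
          (∃! blk, blk ∈ Bfin ∧ p ∈ blk ∧ q ∈ blk) →
          (∃! blk, blk ∈ Bfin ∧ q ∈ blk ∧ p ∈ blk) := by
        rintro p q ⟨blk, ⟨h1, h2, h3⟩, hu⟩
        exact ⟨blk, ⟨h1, h3, h2⟩, fun b' ⟨k1, k2, k3⟩ => hu b' ⟨k1, k3, k2⟩⟩
      have cover_main : ∀ (x : X) (mx : Fin (w x)) (q : PT w t c d),
          grpF (Sum.inl ⟨x, mx⟩) ≠ grpF q →
          ∃! blk, blk ∈ Bfin ∧ (Sum.inl ⟨x, mx⟩ : PT w t c d) ∈ blk ∧ q ∈ blk := by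
        intro x mx q hne2
        rcases q with (⟨y, my⟩ | (⟨j, mc⟩ | md))
        · -- copy / copy
          have hRxy : R x ≠ R y := fun h => hne2 ((hgF_inl_iff x y mx my).2 h)
          have hxy : x ≠ y := fun h => hRxy (by rw [h])
          by_cases hgxy : grpX x = grpX y
          · have hpS := (hSfill_inl (grpX x) x mx).2 rfl
            have hqS := (hSfill_inl (grpX x) y my).2 hgxy.symm
            obtain ⟨blk, ⟨hblk, hpb, hqb⟩, hu⟩ := hf3 (grpX x) _ hpS _ hqS (by
              simp only [locgP_inl]
              intro hcon
              exact hxy (by simpa using hcon))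
            refine ⟨blk, ⟨hmemfill _ blk hblk, hpb, hqb⟩, ?_⟩
            rintro blk' ⟨hblk', hp', hq'⟩
            rcases hlocate blk' hblk' with ⟨i', hi'⟩ | ⟨bb, h1, h2, hi'⟩
            · have hgi' : grpX x = i' := (hSfill_inl i' x mx).1 ((hf2 i' blk' hi').2 _ hp')
              rw [← hgi'] at hi'
              exact hu blk' ⟨hi', hp', hq'⟩
            · have hxbb : x ∈ bb := (hScls_inl bb x mx).1 ((hc2 bb h1 h2 blk' hi').2 _ hp')
              have hybb : y ∈ bb := (hScls_inl bb y my).1 ((hc2 bb h1 h2 blk' hi').2 _ hq')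
              exact absurd hybb (hexc x y hxy hgxy bb h1 hxbb)
          · obtain ⟨bxy, ⟨hbxy, hxb, hyb⟩, hbu⟩ := hcov x y hgxy
            have hbnr : ¬ col bxy = col b0 := by
              intro hcoleq
              apply hRxy
              have hh1 : bxy = R x := hRu x bxy hbxy hcoleq hxb
              have hh2 : bxy = R y := hRu y bxy hbxy hcoleq hyb
              rw [← hh1, ← hh2]
            have hpS := (hScls_inl bxy x mx).2 hxb
            have hqS := (hScls_inl bxy y my).2 hyb
            obtain ⟨blk, ⟨hblk, hpb, hqb⟩, hu⟩ := hc3 bxy hbxy hbnr _ hpS _ hqS (by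
              simp only [locgP_inl]
              intro hcon
              exact hxy (by simpa using hcon))
            refine ⟨blk, ⟨hmemcls bxy blk hbxy hbnr hblk, hpb, hqb⟩, ?_⟩
            rintro blk' ⟨hblk', hp', hq'⟩
            rcases hlocate blk' hblk' with ⟨i', hi'⟩ | ⟨bb, h1, h2, hi'⟩
            · have hgx : grpX x = i' := (hSfill_inl i' x mx).1 ((hf2 i' blk' hi').2 _ hp')
              have hgy : grpX y = i' := (hSfill_inl i' y my).1 ((hf2 i' blk' hi').2 _ hq')
              exact absurd (hgx.trans hgy.symm) hgxy
            · have hxbb : x ∈ bb := (hScls_inl bb x mx).1 ((hc2 bb h1 h2 blk' hi').2 _ hp')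
              have hybb : y ∈ bb := (hScls_inl bb y my).1 ((hc2 bb h1 h2 blk' hi').2 _ hq')
              have hbbeq : bb = bxy := hbu bb ⟨h1, hxbb, hybb⟩
              subst hbbeq
              exact hu blk' ⟨hi', hp', hq'⟩
        · -- copy / batch point
          have hjlt : (j : ℕ) < u - 1 := lt_of_lt_of_le j.isLt htu
          obtain ⟨s, hsCE, hsidx⟩ := hcol_of_idx ⟨(j : ℕ), hjlt⟩
          have hsne : s ≠ col b0 := (Finset.mem_erase.1 hsCE).1
          have hsCU : s ∈ CU := Finset.mem_of_mem_erase hsCE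
          obtain ⟨bb1, hbb1, hcolbb1⟩ := Finset.mem_image.1 hsCU
          obtain ⟨bst, ⟨hbst, hcolbst, hxbst⟩, hbstu⟩ := hres x bb1 hbb1
          have hcolbst' : col bst = s := hcolbst.trans hcolbb1
          have hbstnr : ¬ col bst = col b0 := fun h => hsne (by rw [← hcolbst']; exact h)
          have hidxbst : idxF bst = ⟨(j : ℕ), hjlt⟩ := hsidx bst hbst hbstnr hcolbst'
          have hpS := (hScls_inl bst x mx).2 hxbst
          have hqS := (hScls_b bst j mc).2 (by rw [hidxbst])
          obtain ⟨blk, ⟨hblk, hpb, hqb⟩, hu⟩ := hc3 bst hbst hbstnr _ hpS _ hqS (by simp)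
          refine ⟨blk, ⟨hmemcls bst blk hbst hbstnr hblk, hpb, hqb⟩, ?_⟩
          rintro blk' ⟨hblk', hp', hq'⟩
          rcases hlocate blk' hblk' with ⟨i', hi'⟩ | ⟨bb, h1, h2, hi'⟩
          · exact absurd ((hf2 i' blk' hi').2 _ hq') (hSfill_b i' (j, mc))
          · have hxbb : x ∈ bb := (hScls_inl bb x mx).1 ((hc2 bb h1 h2 blk' hi').2 _ hp')
            have hjidx : (j : ℕ) = (idxF bb : ℕ) :=
              (hScls_b bb j mc).1 ((hc2 bb h1 h2 blk' hi').2 _ hq')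
            have hidxeq : idxF bb = idxF bst := by
              apply Fin.ext
              rw [← hjidx, hidxbst]
            have hcoleq : col bb = col bst := hidx_eq bb bst h1 h2 hbst hbstnr hidxeq
            have hbbeq : bb = bst := hbstu bb ⟨h1, hcoleq.trans hcolbst, hxbb⟩
            subst hbbeq
            exact hu blk' ⟨hi', hp', hq'⟩
        · -- copy / d-point
          have hpS := (hSfill_inl (grpX x) x mx).2 rfl
          have hqS := hSfill_d (grpX x) md
          obtain ⟨blk, ⟨hblk, hpb, hqb⟩, hu⟩ := hf3 (grpX x) _ hpS _ hqS (by simp)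
          refine ⟨blk, ⟨hmemfill _ blk hblk, hpb, hqb⟩, ?_⟩
          rintro blk' ⟨hblk', hp', hq'⟩
          rcases hlocate blk' hblk' with ⟨i', hi'⟩ | ⟨bb, h1, h2, hi'⟩
          · have hgi' : grpX x = i' := (hSfill_inl i' x mx).1 ((hf2 i' blk' hi').2 _ hp')
            rw [← hgi'] at hi'
            exact hu blk' ⟨hi', hp', hq'⟩
          · exact absurd ((hc2 bb h1 h2 blk' hi').2 _ hq') (hScls_d bb md)
      intro p q hne2
      rcases p with (⟨x, mx⟩ | qp)
      · exact cover_main x mx q hne2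
      · rcases q with (⟨y, my⟩ | qq)
        · exact symmEx _ _ (cover_main y my _ (fun h => hne2 h.symm))
        · exact absurd (hgF_inr qp qq) hne2
    · -- exclusion
      intro p q hpq hg blk hblk hp hq
      rcases hlocate blk hblk with ⟨i, hi⟩ | ⟨bb, h1, h2, hi⟩
      · rcases p with (⟨x, mx⟩ | (qb | md)) <;> rcases q with (⟨y, my⟩ | (qb' | md'))
        · by_cases hxy : x = y
          · subst hxy
            exact hf4 i (Sum.inl ⟨x, mx⟩) (Sum.inl ⟨x, my⟩) rfl hpq blk hi hp hq
          · have hRxy : R x = R y := (hgF_inl_iff x y mx my).1 hg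
            have hgx : grpX x = i := (hSfill_inl i x mx).1 ((hf2 i blk hi).2 _ hp)
            have hgy : grpX y = i := (hSfill_inl i y my).1 ((hf2 i blk hi).2 _ hq)
            have hyRx : y ∈ R x := by rw [hRxy]; exact hR3 y
            exact hexc x y hxy (hgx.trans hgy.symm) (R x) (hR1 x) (hR3 x) hyRx
        · exact absurd hg (hgF_inl_ne_inr x mx _)
        · exact absurd hg (hgF_inl_ne_inr x mx _)
        · exact absurd hg.symm (hgF_inl_ne_inr y my _)
        · exact absurd ((hf2 i blk hi).2 _ hp) (hSfill_b i qb)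
        · exact absurd ((hf2 i blk hi).2 _ hp) (hSfill_b i qb)
        · exact absurd hg.symm (hgF_inl_ne_inr y my _)
        · exact absurd ((hf2 i blk hi).2 _ hq) (hSfill_b i qb')
        · exact hf4 i (Sum.inr (Sum.inr md)) (Sum.inr (Sum.inr md')) rfl hpq blk hi hp hq
      · rcases p with (⟨x, mx⟩ | (qb | md)) <;> rcases q with (⟨y, my⟩ | (qb' | md'))
        · by_cases hxy : x = y
          · subst hxy
            exact hc4 bb h1 h2 (Sum.inl ⟨x, mx⟩) (Sum.inl ⟨x, my⟩) rfl hpq blk hi hp hq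
          · have hRxy : R x = R y := (hgF_inl_iff x y mx my).1 hg
            have hxbb : x ∈ bb := (hScls_inl bb x mx).1 ((hc2 bb h1 h2 blk hi).2 _ hp)
            have hybb : y ∈ bb := (hScls_inl bb y my).1 ((hc2 bb h1 h2 blk hi).2 _ hq)
            by_cases hgxy : grpX x = grpX y
            · exact hexc x y hxy hgxy bb h1 hxbb hybb
            · obtain ⟨bxy, ⟨hbxy, hxb, hyb⟩, hbu⟩ := hcov x y hgxy
              have hbbeq : bb = bxy := hbu bb ⟨h1, hxbb, hybb⟩
              have hRxeq : R x = bxy := hbu (R x) ⟨hR1 x, hR3 x, by rw [hRxy]; exact hR3 y⟩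
              apply h2
              rw [hbbeq, ← hRxeq, hR2 x]
        · exact absurd hg (hgF_inl_ne_inr x mx _)
        · exact absurd hg (hgF_inl_ne_inr x mx _)
        · exact absurd hg.symm (hgF_inl_ne_inr y my _)
        · exact hc4 bb h1 h2 (Sum.inr (Sum.inl qb)) (Sum.inr (Sum.inl qb')) rfl hpq blk hi hp hq
        · exact absurd ((hc2 bb h1 h2 blk hi).2 _ hq) (hScls_d bb md')
        · exact absurd hg.symm (hgF_inl_ne_inr y my _)
        · exact absurd ((hc2 bb h1 h2 blk hi).2 _ hp) (hScls_d bb md)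
        · exact absurd ((hc2 bb h1 h2 blk hi).2 _ hp) (hScls_d bb md)

/-- Weighting/filling construction: with `2 ≤ v ≤ u−1` and `0 ≤ t ≤ u−1`,
given a resolvable `(v+1)`-RGDD of type `u^(v+1)`, 4-GDDs of types
`a^u d^1` and `b^u d^1`, a 4-GDD of type `a^v b^1 c^1` whenever `tc > 0`,
and a 4-GDD of type `a^v b^1` whenever `c = 0` or `t < u−1`, there exists a
4-GDD of type `(va+b)^u (ct+d)^1`. -/
theorem fourGDD_weighting_construction (a b c d t u v : ℕ)
    (hv2 : 2 ≤ v) (hvu : v ≤ u - 1) (htu : t ≤ u - 1)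
    (hrgdd : IsRGDD (v + 1) (List.replicate (v + 1) u))
    (had : IsGDD 4 (List.replicate u a ++ [d]))
    (hbd : IsGDD 4 (List.replicate u b ++ [d]))
    (habc : 0 < t * c → IsGDD 4 (List.replicate v a ++ [b, c]))
    (hab : c = 0 ∨ t < u - 1 → IsGDD 4 (List.replicate v a ++ [b])) :
    IsGDD 4 (List.replicate u (v * a + b) ++ [c * t + d]) := by
  classical
  obtain ⟨grp0, B0, col, hne, hcard, hbs, hcov, hexc, hresol⟩ := hrgdd
  have hlen : (List.replicate (v + 1) u).length = v + 1 := by simp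
  refine main_aux a b c d t u v hv2 (by omega) htu
    (fun x => Fin.cast hlen (grp0 x)) B0 col hne ?_ hbs ?_ ?_ hresol had hbd habc hab
  · intro i
    have hfe : (Finset.univ.filter fun x => Fin.cast hlen (grp0 x) = i)
        = (Finset.univ.filter fun x => grp0 x = Fin.cast hlen.symm i) := by
      apply Finset.filter_congr
      intro x _
      simp [Fin.ext_iff]
    rw [hfe, hcard (Fin.cast hlen.symm i)]
    simp [List.getElem_replicate]
  · intro x y h
    exact hcov x y (fun he => h (show Fin.cast hlen (grp0 x) = Fin.cast hlen (grp0 y) by rw [he]))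
  · intro x y hxy h
    refine hexc x y hxy ?_
    apply Fin.ext
    simpa [Fin.ext_iff] using h
end

section
/- (Inflation by a DGDD) Suppose there exists a 4-GDD of type g_1^{t_1} g_2^{t_2} ... g_r^{t_r}, let u ≥ 4 with u ≠ 6, suppose there exists a 4-DGDD of type (u, 1^u)^4, and suppose for each i = 1, ..., r there exists a 4-GDD of type g_i^u m^1. Then there exists a 4-GDD of type (g_1 t_1 + g_2 t_2 + ... + g_r t_r)^u m^1. -/
open Finset

/-- `Is4DGDD s t` asserts the existence of a double group divisible design
with block size 4 of type `(s, 1^s)^t`: the point set `Fin (s*t)` is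
partitioned into `t` groups of size `s` and into `s` holes of size `t`, each
group meeting each hole in exactly one point; the block set `B` is a nonempty
collection of 4-element subsets such that every pair of points lying neither
in a common group nor in a common hole is in exactly one block, and no block
contains two distinct points of a common group or of a common hole. -/
def Is4DGDD (s t : ℕ) : Prop :=
  ∃ (grp : Fin (s * t) → Fin t) (hole : Fin (s * t) → Fin s)
    (B : Finset (Finset (Fin (s * t)))),
    B.Nonempty ∧
    (∀ i : Fin t, (Finset.univ.filter fun x => grp x = i).card = s) ∧
    (∀ j : Fin s, (Finset.univ.filter fun x => hole x = j).card = t) ∧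
    (∀ (i : Fin t) (j : Fin s),
      (Finset.univ.filter fun x => grp x = i ∧ hole x = j).card = 1) ∧
    (∀ b ∈ B, b.card = 4) ∧
    (∀ x y : Fin (s * t), grp x ≠ grp y → hole x ≠ hole y →
      ∃! b, b ∈ B ∧ x ∈ b ∧ y ∈ b) ∧
    (∀ x y : Fin (s * t), x ≠ y → (grp x = grp y ∨ hole x = hole y) →
      ∀ b ∈ B, x ∈ b → y ∉ b)


lemma isGDD_transfer (k : ℕ) (L : List ℕ) {α : Type} [DecidableEq α] [Fintype α]
    (e : α ≃ Fin L.sum) {t : ℕ} (ht : L.length = t)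
    (grp : α → Fin t) (B : Finset (Finset α))
    (hne : B.Nonempty)
    (hcard : ∀ i : Fin t, (univ.filter fun x => grp x = i).card = L.get (Fin.cast ht.symm i))
    (hbk : ∀ b ∈ B, b.card = k)
    (hcov : ∀ x y, grp x ≠ grp y → ∃! b, b ∈ B ∧ x ∈ b ∧ y ∈ b)
    (hng : ∀ x y, x ≠ y → grp x = grp y → ∀ b ∈ B, x ∈ b → y ∉ b) :
    IsGDD k L := by
  refine ⟨fun z => Fin.cast ht.symm (grp (e.symm z)),
    B.image (fun b => b.map e.toEmbedding), ?_, ?_, ?_, ?_, ?_⟩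
  · exact hne.image _
  · intro i
    have h1 : ∀ z : Fin L.sum,
        (Fin.cast ht.symm (grp (e.symm z)) = i) ↔ grp (e.symm z) = Fin.cast ht i := by
      intro z
      constructor <;> intro h <;> exact Fin.ext (by simpa [Fin.ext_iff] using h)
    rw [Finset.filter_congr (fun z _ => h1 z)]
    have h2 := hcard (Fin.cast ht i)
    have h4 : Fin.cast ht.symm (Fin.cast ht i) = i := Fin.ext rfl
    rw [h4] at h2
    rw [← h2]
    apply Finset.card_bij' (fun z _ => e.symm z) (fun x _ => e x)
    · intro a ha; simp only [mem_filter, mem_univ, true_and] at ha ⊢; simpa using ha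
    · intro a ha; simp only [mem_filter, mem_univ, true_and] at ha ⊢; simpa using ha
    · intro a _; simp
    · intro a _; simp
  · intro b hb
    obtain ⟨c, hc, rfl⟩ := Finset.mem_image.mp hb
    rw [Finset.card_map]; exact hbk c hc
  · intro x y hxy
    have hxy' : grp (e.symm x) ≠ grp (e.symm y) := by
      intro h; apply hxy
      show Fin.cast ht.symm (grp (e.symm x)) = Fin.cast ht.symm (grp (e.symm y))
      rw [h]
    obtain ⟨b, ⟨hbB, hxb, hyb⟩, hbu⟩ := hcov _ _ hxy'
    refine ⟨b.map e.toEmbedding, ⟨Finset.mem_image_of_mem _ hbB, ?_, ?_⟩, ?_⟩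
    · rw [Finset.mem_map_equiv]; simpa using hxb
    · rw [Finset.mem_map_equiv]; simpa using hyb
    · rintro c ⟨hcB, hxc, hyc⟩
      obtain ⟨b', hb'B, rfl⟩ := Finset.mem_image.mp hcB
      rw [Finset.mem_map_equiv] at hxc hyc
      rw [hbu b' ⟨hb'B, by simpa using hxc, by simpa using hyc⟩]
  · intro x y hxy hg c hcB hxc
    obtain ⟨b', hb'B, rfl⟩ := Finset.mem_image.mp hcB
    rw [Finset.mem_map_equiv] at hxc ⊢
    refine hng _ _ (fun h => hxy (by simpa using congrArg e h)) ?_ b' hb'B hxc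
    exact Fin.ext (by simpa [Fin.ext_iff] using hg)

section InflAux
open Finset
variable {n u m r N : ℕ}

lemma get_repl_append_lt {g mm u : ℕ} (idx : Fin (List.replicate u g ++ [mm]).length)
    (h : (idx : ℕ) < u) : (List.replicate u g ++ [mm]).get idx = g := by
  rw [List.get_eq_getElem, List.getElem_append_left (by simpa using h)]
  simp

lemma get_repl_append_eq {g mm u : ℕ} (idx : Fin (List.replicate u g ++ [mm]).length)
    (h : (idx : ℕ) = u) : (List.replicate u g ++ [mm]).get idx = mm := by
  rw [List.get_eq_getElem, List.getElem_append_right (by simp [h])]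
  simp [h]

/-- Group map on the inflated point set. -/
def inflGrp (n u m : ℕ) : (Fin n × Fin u) ⊕ Fin m → Fin (u + 1) :=
  Sum.elim (fun xj => xj.2.castSucc) fun _ => Fin.last u

/-- Points of the inflated design lying over base group `i` in final group `w`. -/
def inflTar (m : ℕ) (g0 : Fin n → Fin r) (i : Fin r) (w : Fin (u + 1)) :
    Finset ((Fin n × Fin u) ⊕ Fin m) :=
  Fin.lastCases (univ.image Sum.inr)
    (fun j => (univ.filter fun x => g0 x = i).image fun x => Sum.inl (x, j)) w

lemma mem_inflTar_castSucc {g0 : Fin n → Fin r} {i : Fin r} {j : Fin u} {a} :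
    a ∈ inflTar m g0 i j.castSucc ↔ ∃ x, g0 x = i ∧ Sum.inl (x, j) = a := by
  simp [inflTar]

lemma mem_inflTar_last {g0 : Fin n → Fin r} {i : Fin r} {a} :
    a ∈ inflTar m g0 i (Fin.last u) ↔ ∃ p, Sum.inr p = a := by
  simp [inflTar]

lemma inflGrp_of_mem_inflTar {g0 : Fin n → Fin r} {i : Fin r} {w} {a}
    (h : a ∈ inflTar m g0 i w) : inflGrp n u m a = w := by
  induction w using Fin.lastCases with
  | last => obtain ⟨p, rfl⟩ := mem_inflTar_last.mp h; rfl
  | cast j => obtain ⟨x, _, rfl⟩ := mem_inflTar_castSucc.mp h; rfl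

lemma inl_mem_inflTar {g0 : Fin n → Fin r} {i : Fin r} {w} {x : Fin n} {j : Fin u}
    (h : (Sum.inl (x, j) : (Fin n × Fin u) ⊕ Fin m) ∈ inflTar m g0 i w) : g0 x = i := by
  have hw : w = j.castSucc := (inflGrp_of_mem_inflTar h).symm
  subst hw
  obtain ⟨x', hx', he⟩ := mem_inflTar_castSucc.mp h
  have hx : x' = x := by simpa using he
  subst hx; exact hx'

lemma card_inflTar_castSucc {g0 : Fin n → Fin r} {i : Fin r} {j : Fin u} :
    (inflTar m g0 i j.castSucc).card = (univ.filter fun x => g0 x = i).card := by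
  rw [inflTar, Fin.lastCases_castSucc]
  exact Finset.card_image_of_injective _ (fun a b hab => by simpa using hab)

lemma card_inflTar_last {g0 : Fin n → Fin r} {i : Fin r} :
    (inflTar (u := u) m g0 i (Fin.last u)).card = m := by
  rw [inflTar, Fin.lastCases_last,
    Finset.card_image_of_injective _ Sum.inr_injective]
  simp

/-- The embedding of a fill design into the inflated point set. -/
noncomputable def inflPhi (g0 : Fin n → Fin r) (i : Fin r) (fgp : Fin N → Fin (u + 1))
    (hST : ∀ w, (univ.filter fun p => fgp p = w).card = (inflTar m g0 i w).card) :
    Fin N → (Fin n × Fin u) ⊕ Fin m :=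
  fun p => (Finset.equivOfCardEq (hST (fgp p))
    ⟨p, Finset.mem_filter.mpr ⟨Finset.mem_univ _, rfl⟩⟩ : _)

variable {g0 : Fin n → Fin r} {i : Fin r} {fgp : Fin N → Fin (u + 1)}
  {hST : ∀ w, (univ.filter fun p => fgp p = w).card = (inflTar m g0 i w).card}

lemma inflPhi_eq {p : Fin N} {w} (h : fgp p = w) :
    inflPhi g0 i fgp hST p = (Finset.equivOfCardEq (hST w)
      ⟨p, Finset.mem_filter.mpr ⟨Finset.mem_univ _, h⟩⟩ : _) := by
  subst h; rfl

lemma inflPhi_mem (p : Fin N) : inflPhi g0 i fgp hST p ∈ inflTar m g0 i (fgp p) :=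
  (Finset.equivOfCardEq (hST (fgp p)) ⟨p, Finset.mem_filter.mpr ⟨Finset.mem_univ _, rfl⟩⟩).2

lemma inflGrp_inflPhi (p : Fin N) :
    inflGrp n u m (inflPhi g0 i fgp hST p) = fgp p :=
  inflGrp_of_mem_inflTar (inflPhi_mem p)

lemma inflPhi_injective : Function.Injective (inflPhi g0 i fgp hST) := by
  intro p q h
  have hw : fgp p = fgp q := by
    rw [← inflGrp_inflPhi (hST := hST) p, ← inflGrp_inflPhi (hST := hST) q, h]
  rw [inflPhi_eq (hST := hST) hw, inflPhi_eq (hST := hST) (rfl : fgp q = fgp q)] at h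
  have := (Finset.equivOfCardEq (hST (fgp q))).injective (Subtype.coe_injective h)
  exact congrArg Subtype.val this

lemma inflPhi_surjOn {a} {w} (ha : a ∈ inflTar m g0 i w) :
    ∃ p, fgp p = w ∧ inflPhi g0 i fgp hST p = a := by
  set q := (Finset.equivOfCardEq (hST w)).symm ⟨a, ha⟩ with hq
  have hfq : fgp (q : Fin N) = w := (Finset.mem_filter.mp q.2).2
  refine ⟨q, hfq, ?_⟩
  rw [inflPhi_eq (hST := hST) hfq]
  have h2 : (⟨(q : Fin N), Finset.mem_filter.mpr ⟨Finset.mem_univ _, hfq⟩⟩ :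
      {p // p ∈ univ.filter fun p => fgp p = w}) = q := Subtype.ext rfl
  rw [h2, hq]
  simp

/-- The map overlaying a DGDD copy on an inflated base block. -/
noncomputable def inflMb (m : ℕ) (dg : Fin (u * 4) → Fin 4) (dh : Fin (u * 4) → Fin u)
    (b : Finset (Fin n)) (hb : b.card = 4) : Fin (u * 4) → (Fin n × Fin u) ⊕ Fin m :=
  fun z => Sum.inl ((b.orderIsoOfFin hb (dg z) : Fin n), dh z)

variable {dg : Fin (u * 4) → Fin 4} {dh : Fin (u * 4) → Fin u}
  {b : Finset (Fin n)} {hb : b.card = 4}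

lemma inflMb_inl_iff {z a j} :
    inflMb m dg dh b hb z = Sum.inl (a, j) ↔
      ((b.orderIsoOfFin hb (dg z) : Fin n) = a ∧ dh z = j) := by
  simp [inflMb, Prod.ext_iff]

lemma inflMb_ne_inr {z p} : inflMb m dg dh b hb z ≠ Sum.inr p := by
  simp [inflMb]

lemma mem_of_inflMb_inl {z a j} (h : inflMb m dg dh b hb z = Sum.inl (a, j)) : a ∈ b := by
  rw [inflMb_inl_iff] at h
  exact h.1 ▸ (b.orderIsoOfFin hb (dg z)).2

lemma inflMb_injective (hdinj : ∀ z w, dg z = dg w → dh z = dh w → z = w) :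
    Function.Injective (inflMb m dg dh b hb) := by
  intro z w h
  simp only [inflMb, Sum.inl.injEq, Prod.mk.injEq] at h
  exact hdinj z w ((b.orderIsoOfFin hb).injective (Subtype.coe_injective h.1)) h.2

lemma exists_inflMb_inl (hdex : ∀ gi hj, ∃ z, dg z = gi ∧ dh z = hj)
    {a : Fin n} (ha : a ∈ b) (j : Fin u) :
    ∃ z, inflMb m dg dh b hb z = Sum.inl (a, j) := by
  obtain ⟨z, h1, h2⟩ := hdex ((b.orderIsoOfFin hb).symm ⟨a, ha⟩) j
  exact ⟨z, by rw [inflMb_inl_iff, h1, h2]; simp⟩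

lemma dg_eq_of_inflMb_inl {z w a a' j j'} (hz : inflMb m dg dh b hb z = Sum.inl (a, j))
    (hw : inflMb m dg dh b hb w = Sum.inl (a', j')) (haa : a = a') : dg z = dg w := by
  rw [inflMb_inl_iff] at hz hw
  subst haa
  exact (b.orderIsoOfFin hb).injective (Subtype.coe_injective (hz.1.trans hw.1.symm))

end InflAux

/-- Inflation by a DGDD: if there is a 4-GDD whose group sizes are listed in
`L` (i.e. of type `g₁^(t₁) ⋯ g_r^(t_r)`), `u ≥ 4`, `u ≠ 6`, there is a
4-DGDD of type `(u, 1^u)^4`, and for every group size `s` occurring in `L`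
there is a 4-GDD of type `s^u m^1`, then there is a 4-GDD of type
`(g₁t₁ + g₂t₂ + ⋯ + g_rt_r)^u m^1`. -/
theorem fourGDD_inflation_by_DGDD (L : List ℕ) (u m : ℕ)
    (hu : 4 ≤ u) (hu6 : u ≠ 6)
    (hL : IsGDD 4 L)
    (hdgdd : Is4DGDD u 4)
    (hfill : ∀ s ∈ L, IsGDD 4 (List.replicate u s ++ [m])) :
    IsGDD 4 (List.replicate u L.sum ++ [m]) := by
  classical
  obtain ⟨g0, B0, hB0ne, hg0card, hB0sz, hB0cov, hB0ng⟩ := hL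
  obtain ⟨dg, dh, D, hDne, hDgc, hDhc, hDgh, hDsz, hDcov, hDng⟩ := hdgdd
  have hfill' : ∀ i : Fin L.length, IsGDD 4 (List.replicate u (L.get i) ++ [m]) :=
    fun i => hfill _ (L.get_mem i)
  choose fgrp0 FF hFne hFcard hFsz hFcov hFng using hfill'
  -- facts about the DGDD point structure
  have hdinj : ∀ z w, dg z = dg w → dh z = dh w → z = w := by
    intro z w h1 h2
    have h := hDgh (dg z) (dh z)
    rw [Finset.card_eq_one] at h
    obtain ⟨t0, ht0⟩ := h
    have hz : z ∈ Finset.univ.filter (fun x => dg x = dg z ∧ dh x = dh z) :=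
      Finset.mem_filter.mpr ⟨Finset.mem_univ _, rfl, rfl⟩
    have hw : w ∈ Finset.univ.filter (fun x => dg x = dg z ∧ dh x = dh z) :=
      Finset.mem_filter.mpr ⟨Finset.mem_univ _, h1.symm, h2.symm⟩
    rw [ht0, Finset.mem_singleton] at hz hw
    rw [hz, hw]
  have hdex : ∀ gi hj, ∃ z, dg z = gi ∧ dh z = hj := by
    intro gi hj
    have h := hDgh gi hj
    have hpos : (Finset.univ.filter (fun x => dg x = gi ∧ dh x = hj)).Nonempty := by
      rw [← Finset.card_pos, h]; norm_num
    obtain ⟨z, hz⟩ := hpos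
    exact ⟨z, (Finset.mem_filter.mp hz).2⟩
  have hDblk : ∀ z w, z ≠ w → ∀ d ∈ D, z ∈ d → w ∈ d → dg z ≠ dg w ∧ dh z ≠ dh w := by
    intro z w hzw d hd hzd hwd
    exact ⟨fun h => hDng z w hzw (Or.inl h) d hd hzd hwd,
           fun h => hDng z w hzw (Or.inr h) d hd hzd hwd⟩
  -- fill designs, recast
  have hLilen : ∀ i : Fin L.length, (List.replicate u (L.get i) ++ [m]).length = u + 1 :=
    fun i => by simp
  have hST : ∀ (i : Fin L.length) (w : Fin (u + 1)),
      (Finset.univ.filter fun p => Fin.cast (hLilen i) (fgrp0 i p) = w).card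
        = (inflTar m g0 i w).card := by
    intro i w
    have h1 : (Finset.univ.filter fun p => Fin.cast (hLilen i) (fgrp0 i p) = w)
        = (Finset.univ.filter fun p => fgrp0 i p = Fin.cast (hLilen i).symm w) := by
      apply Finset.filter_congr
      intro p _
      constructor <;> intro h <;> exact Fin.ext (by simpa [Fin.ext_iff] using h)
    rw [h1, hFcard i (Fin.cast (hLilen i).symm w)]
    induction w using Fin.lastCases with
    | last =>
      rw [card_inflTar_last, get_repl_append_eq _ (by simp)]
    | cast j =>
      rw [card_inflTar_castSucc, hg0card i, get_repl_append_lt _ (by simpa using j.isLt)]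
  -- the two block families
  set F1 : Finset (Finset ((Fin L.sum × Fin u) ⊕ Fin m)) :=
    B0.attach.biUnion (fun bb =>
      D.image fun d => d.image (inflMb m dg dh bb.1 (hB0sz bb.1 bb.2))) with hF1def
  set F2 : Finset (Finset ((Fin L.sum × Fin u) ⊕ Fin m)) :=
    Finset.univ.biUnion (fun i : Fin L.length =>
      (FF i).image fun f => f.image
        (inflPhi g0 i (fun p => Fin.cast (hLilen i) (fgrp0 i p)) (hST i))) with hF2def
  have hF1mem : ∀ {c}, c ∈ F1 ↔
      ∃ b, ∃ (hb : b ∈ B0), ∃ d ∈ D, c = d.image (inflMb m dg dh b (hB0sz b hb)) := by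
    intro c
    constructor
    · intro h
      obtain ⟨bb, -, h2⟩ := Finset.mem_biUnion.mp h
      obtain ⟨d, hd, rfl⟩ := Finset.mem_image.mp h2
      exact ⟨bb.1, bb.2, d, hd, rfl⟩
    · rintro ⟨b, hb, d, hd, rfl⟩
      exact Finset.mem_biUnion.mpr ⟨⟨b, hb⟩, Finset.mem_attach _ _,
        Finset.mem_image_of_mem _ hd⟩
  have hF2mem : ∀ {c}, c ∈ F2 ↔ ∃ i, ∃ f ∈ FF i, c = f.image
      (inflPhi g0 i (fun p => Fin.cast (hLilen i) (fgrp0 i p)) (hST i)) := by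
    intro c
    constructor
    · intro h
      obtain ⟨i, -, h2⟩ := Finset.mem_biUnion.mp h
      obtain ⟨f, hf, rfl⟩ := Finset.mem_image.mp h2
      exact ⟨i, f, hf, rfl⟩
    · rintro ⟨i, f, hf, rfl⟩
      exact Finset.mem_biUnion.mpr ⟨i, Finset.mem_univ _, Finset.mem_image_of_mem _ hf⟩
  -- distinct inflated points of an F1 block lie over distinct base groups
  have hF1pair : ∀ {c}, c ∈ F1 → ∀ {a j a' j'},
      Sum.inl (a, j) ∈ c → Sum.inl (a', j') ∈ c → ¬(a = a' ∧ j = j') →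
      g0 a ≠ g0 a' ∧ a ≠ a' ∧ j ≠ j' := by
    intro c hc a j a' j' hx hy hne
    obtain ⟨b, hb, d, hd, rfl⟩ := hF1mem.mp hc
    obtain ⟨z, hzd, hz⟩ := Finset.mem_image.mp hx
    obtain ⟨w, hwd, hw⟩ := Finset.mem_image.mp hy
    have hzw : z ≠ w := by
      rintro rfl
      rw [hz] at hw
      simp only [Sum.inl.injEq, Prod.mk.injEq] at hw
      exact hne hw
    obtain ⟨hgzw, hhzw⟩ := hDblk z w hzw d hd hzd hwd
    have haa : a ≠ a' := fun h => hgzw (dg_eq_of_inflMb_inl hz hw h)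
    have hjj : j ≠ j' := by
      rw [inflMb_inl_iff] at hz hw
      exact fun h => hhzw (hz.2.trans (h ▸ hw.2.symm))
    exact ⟨fun hgg => hB0ng a a' haa hgg b hb (mem_of_inflMb_inl hz)
      (mem_of_inflMb_inl hw), haa, hjj⟩
  have hF1noinr : ∀ {c}, c ∈ F1 → ∀ p, Sum.inr p ∉ c := by
    intro c hc p hp
    obtain ⟨b, hb, d, hd, rfl⟩ := hF1mem.mp hc
    obtain ⟨z, -, hz⟩ := Finset.mem_image.mp hp
    exact inflMb_ne_inr hz
  have hphi_inl : ∀ (i : Fin L.length) p a j,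
      inflPhi g0 i (fun p => Fin.cast (hLilen i) (fgrp0 i p)) (hST i) p = Sum.inl (a, j) →
      g0 a = i := by
    intro i p a j h
    have hm := inflPhi_mem (hST := hST i) p
    rw [h] at hm
    exact inl_mem_inflTar hm
  -- existence and uniqueness within F2 for pairs over a common base group
  have hF2EU : ∀ (i : Fin L.length) x y wx wy, x ∈ inflTar m g0 i wx →
      y ∈ inflTar m g0 i wy → wx ≠ wy →
      ∃! c, c ∈ F2 ∧ x ∈ c ∧ y ∈ c := by
    intro i x y wx wy hx hy hw
    obtain ⟨p, hfp, hpx⟩ := inflPhi_surjOn (hST := hST i) hx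
    obtain ⟨q, hfq, hqy⟩ := inflPhi_surjOn (hST := hST i) hy
    have hpq : fgrp0 i p ≠ fgrp0 i q := by
      intro h
      apply hw
      rw [← hfp, ← hfq]
      show Fin.cast (hLilen i) (fgrp0 i p) = Fin.cast (hLilen i) (fgrp0 i q)
      rw [h]
    obtain ⟨f, ⟨hfF, hpf, hqf⟩, hfu⟩ := hFcov i p q hpq
    refine ⟨f.image (inflPhi g0 i (fun p => Fin.cast (hLilen i) (fgrp0 i p)) (hST i)),
      ⟨hF2mem.mpr ⟨i, f, hfF, rfl⟩, hpx ▸ Finset.mem_image_of_mem _ hpf,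
        hqy ▸ Finset.mem_image_of_mem _ hqf⟩, ?_⟩
    rintro c ⟨hcF2, hxc, hyc⟩
    obtain ⟨i', f', hf'F, rfl⟩ := hF2mem.mp hcF2
    obtain ⟨p', hp'f, hp'x⟩ := Finset.mem_image.mp hxc
    obtain ⟨q', hq'f, hq'y⟩ := Finset.mem_image.mp hyc
    have hii : i' = i := by
      rcases x with ⟨a, j⟩ | p0
      · exact (hphi_inl i' p' a j hp'x).symm.trans (inl_mem_inflTar hx)
      · rcases y with ⟨a, j⟩ | q0
        · exact (hphi_inl i' q' a j hq'y).symm.trans (inl_mem_inflTar hy)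
        · exfalso
          apply hw
          rw [← inflGrp_of_mem_inflTar hx, ← inflGrp_of_mem_inflTar hy]
          rfl
    subst hii
    have hpp : p' = p := inflPhi_injective (hST := hST i') (hp'x.trans hpx.symm)
    have hqq : q' = q := inflPhi_injective (hST := hST i') (hq'y.trans hqy.symm)
    subst hpp; subst hqq
    rw [hfu f' ⟨hf'F, hp'f, hq'f⟩]
  have hsymmEU : ∀ x y : (Fin L.sum × Fin u) ⊕ Fin m,
      (∃! c, c ∈ F1 ∪ F2 ∧ x ∈ c ∧ y ∈ c) → ∃! c, c ∈ F1 ∪ F2 ∧ y ∈ c ∧ x ∈ c := by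
    rintro x y ⟨c, ⟨h1, h2, h3⟩, hu2⟩
    exact ⟨c, ⟨h1, h3, h2⟩, fun c' ⟨a1, a2, a3⟩ => hu2 c' ⟨a1, a3, a2⟩⟩
  have hfillcase : ∀ (i : Fin L.length) x y wx wy, x ∈ inflTar m g0 i wx →
      y ∈ inflTar m g0 i wy → wx ≠ wy →
      (∀ c ∈ F1, ¬(x ∈ c ∧ y ∈ c)) →
      ∃! c, c ∈ F1 ∪ F2 ∧ x ∈ c ∧ y ∈ c := by
    intro i x y wx wy hx hy hw hnF1
    obtain ⟨c, ⟨h1, h2, h3⟩, hu2⟩ := hF2EU i x y wx wy hx hy hw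
    refine ⟨c, ⟨Finset.mem_union_right _ h1, h2, h3⟩, ?_⟩
    rintro c' ⟨hc', hxc', hyc'⟩
    rcases Finset.mem_union.mp hc' with h | h
    · exact absurd ⟨hxc', hyc'⟩ (hnF1 c' h)
    · exact hu2 c' ⟨h, hxc', hyc'⟩
  -- main coverage
  have hcovMain : ∀ x y, inflGrp L.sum u m x ≠ inflGrp L.sum u m y →
      ∃! c, c ∈ F1 ∪ F2 ∧ x ∈ c ∧ y ∈ c := by
    have main : ∀ (a : Fin L.sum) (j : Fin u) y,
        inflGrp L.sum u m (Sum.inl (a, j)) ≠ inflGrp L.sum u m y →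
        ∃! c, c ∈ F1 ∪ F2 ∧ Sum.inl (a, j) ∈ c ∧ y ∈ c := by
      intro a j y hxy
      rcases y with ⟨c0, k⟩ | q
      · -- both inflated points
        have hjk : j ≠ k := fun h => hxy (by
          show j.castSucc = k.castSucc
          rw [h])
        by_cases hg : g0 a = g0 c0
        · -- common base group: fill design case
          apply hfillcase (g0 a) _ _ j.castSucc k.castSucc
          · exact mem_inflTar_castSucc.mpr ⟨a, rfl, rfl⟩
          · exact mem_inflTar_castSucc.mpr ⟨c0, hg.symm, rfl⟩
          · exact fun h => hjk (Fin.castSucc_inj.mp h)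
          · rintro c hcF1 ⟨hxc, hyc⟩
            exact (hF1pair hcF1 hxc hyc (fun h => hjk h.2)).1 hg
        · -- distinct base groups: DGDD case
          have hac : a ≠ c0 := fun h => hg (by rw [h])
          obtain ⟨b, ⟨hbB, hab, hcb⟩, hbu⟩ := hB0cov a c0 hg
          obtain ⟨z1, hz1⟩ := exists_inflMb_inl (m := m) (hb := hB0sz b hbB) hdex hab j
          obtain ⟨z2, hz2⟩ := exists_inflMb_inl (m := m) (hb := hB0sz b hbB) hdex hcb k
          have hgz : dg z1 ≠ dg z2 := by
            intro h
            apply hac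
            rw [inflMb_inl_iff] at hz1 hz2
            rw [← hz1.1, ← hz2.1, h]
          have hhz : dh z1 ≠ dh z2 := by
            rw [inflMb_inl_iff] at hz1 hz2
            rw [hz1.2, hz2.2]; exact hjk
          obtain ⟨d, ⟨hdD, h1d, h2d⟩, hdu⟩ := hDcov z1 z2 hgz hhz
          refine ⟨d.image (inflMb m dg dh b (hB0sz b hbB)),
            ⟨Finset.mem_union_left _ (hF1mem.mpr ⟨b, hbB, d, hdD, rfl⟩),
              hz1 ▸ Finset.mem_image_of_mem _ h1d,
              hz2 ▸ Finset.mem_image_of_mem _ h2d⟩, ?_⟩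
          rintro c' ⟨hc', hxc', hyc'⟩
          rcases Finset.mem_union.mp hc' with h | h
          · obtain ⟨b', hb'B, d', hd'D, rfl⟩ := hF1mem.mp h
            obtain ⟨w1, hw1d, hw1⟩ := Finset.mem_image.mp hxc'
            obtain ⟨w2, hw2d, hw2⟩ := Finset.mem_image.mp hyc'
            have hbb : b' = b := hbu b' ⟨hb'B, mem_of_inflMb_inl hw1, mem_of_inflMb_inl hw2⟩
            subst hbb
            have hwz1 : w1 = z1 := inflMb_injective hdinj (hw1.trans hz1.symm)
            have hwz2 : w2 = z2 := inflMb_injective hdinj (hw2.trans hz2.symm)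
            subst hwz1; subst hwz2
            rw [hdu d' ⟨hd'D, hw1d, hw2d⟩]
          · exfalso
            obtain ⟨i', f', hf', rfl⟩ := hF2mem.mp h
            obtain ⟨p', -, hp'⟩ := Finset.mem_image.mp hxc'
            obtain ⟨q', -, hq'⟩ := Finset.mem_image.mp hyc'
            exact hg ((hphi_inl i' p' a j hp').symm ▸ (hphi_inl i' q' c0 k hq').symm ▸ rfl)
      · -- one inflated point, one adjoined point
        apply hfillcase (g0 a) _ _ j.castSucc (Fin.last u)
        · exact mem_inflTar_castSucc.mpr ⟨a, rfl, rfl⟩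
        · exact mem_inflTar_last.mpr ⟨q, rfl⟩
        · exact (Fin.castSucc_lt_last j).ne
        · rintro c hcF1 ⟨-, hyc⟩
          exact hF1noinr hcF1 q hyc
    intro x y hxy
    rcases x with ⟨a, j⟩ | p
    · exact main a j y hxy
    · rcases y with ⟨a, j⟩ | q
      · exact hsymmEU _ _ (main a j (Sum.inr p) (Ne.symm hxy))
      · exact absurd rfl hxy
  -- no block contains two distinct points of a common final group
  have hngMain : ∀ x y, x ≠ y → inflGrp L.sum u m x = inflGrp L.sum u m y →
      ∀ c ∈ F1 ∪ F2, x ∈ c → y ∉ c := by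
    intro x y hne hg c hc hxc hyc
    rcases Finset.mem_union.mp hc with h | h
    · rcases x with ⟨a, j⟩ | p
      · rcases y with ⟨a', j'⟩ | q
        · have hjj : j = j' := Fin.castSucc_inj.mp hg
          exact (hF1pair h hxc hyc (fun hh => hne (by rw [hh.1, hh.2]))).2.2 hjj
        · exact hF1noinr h q hyc
      · exact hF1noinr h p hxc
    · obtain ⟨i, f, hf, rfl⟩ := hF2mem.mp h
      obtain ⟨p, hpf, hpx⟩ := Finset.mem_image.mp hxc
      obtain ⟨q, hqf, hqy⟩ := Finset.mem_image.mp hyc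
      have hpq : p ≠ q := fun hh => hne (by rw [← hpx, ← hqy, hh])
      have hgr : fgrp0 i p = fgrp0 i q := by
        have h1 := inflGrp_inflPhi (hST := hST i) p
        have h2 := inflGrp_inflPhi (hST := hST i) q
        rw [hpx] at h1
        rw [hqy] at h2
        have h3 : Fin.cast (hLilen i) (fgrp0 i p) = Fin.cast (hLilen i) (fgrp0 i q) := by
          rw [← h1, ← h2, hg]
        exact Fin.ext (by simpa [Fin.ext_iff] using h3)
      exact hFng i p q hpq hgr f hf hpf hqf
  -- block sizes
  have hszMain : ∀ c ∈ F1 ∪ F2, c.card = 4 := by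
    intro c hc
    rcases Finset.mem_union.mp hc with h | h
    · obtain ⟨b, hb, d, hd, rfl⟩ := hF1mem.mp h
      rw [Finset.card_image_of_injective _ (inflMb_injective hdinj)]
      exact hDsz d hd
    · obtain ⟨i, f, hf, rfl⟩ := hF2mem.mp h
      rw [Finset.card_image_of_injective _ (inflPhi_injective (hST := hST i))]
      exact hFsz i f hf
  -- nonemptiness
  have hneMain : (F1 ∪ F2).Nonempty := by
    obtain ⟨b, hb⟩ := hB0ne
    obtain ⟨d, hd⟩ := hDne
    exact ⟨d.image (inflMb m dg dh b (hB0sz b hb)),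
      Finset.mem_union_left _ (hF1mem.mpr ⟨b, hb, d, hd, rfl⟩)⟩
  -- group cardinalities
  have hL'len : (List.replicate u L.sum ++ [m]).length = u + 1 := by simp
  have hgcMain : ∀ w : Fin (u + 1),
      (Finset.univ.filter fun a => inflGrp L.sum u m a = w).card
        = (List.replicate u L.sum ++ [m]).get (Fin.cast hL'len.symm w) := by
    intro w
    induction w using Fin.lastCases with
    | last =>
      have h1 : (Finset.univ.filter fun a => inflGrp L.sum u m a = Fin.last u)
          = Finset.univ.image (Sum.inr : Fin m → (Fin L.sum × Fin u) ⊕ Fin m) := by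
        ext a
        rcases a with ⟨x, j⟩ | p
        · simp only [Finset.mem_filter, Finset.mem_univ, true_and]; simp [inflGrp, (Fin.castSucc_lt_last j).ne]
        · simp only [Finset.mem_filter, Finset.mem_univ, true_and]; simp [inflGrp]
      rw [h1, Finset.card_image_of_injective _ Sum.inr_injective, Finset.card_univ,
        Fintype.card_fin, get_repl_append_eq _ (by simp)]
    | cast j =>
      have h1 : (Finset.univ.filter fun a => inflGrp L.sum u m a = j.castSucc)
          = Finset.univ.image (fun x : Fin L.sum =>
              (Sum.inl (x, j) : (Fin L.sum × Fin u) ⊕ Fin m)) := by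
        ext a
        rcases a with ⟨x, j'⟩ | p
        · simp [inflGrp, Fin.castSucc_inj, Prod.ext_iff, eq_comm, And.comm]
        · simp only [Finset.mem_filter, Finset.mem_univ, true_and]; simp [inflGrp, (Fin.castSucc_lt_last j).ne']
      rw [h1, Finset.card_image_of_injective _ (fun a b hab => by simpa using hab),
        Finset.card_univ, Fintype.card_fin, get_repl_append_lt _ (by simpa using j.isLt)]
  -- transfer to `Fin` of the list sum
  have hsum : (List.replicate u L.sum ++ [m]).sum = L.sum * u + m := by
    simp [List.sum_replicate, smul_eq_mul, mul_comm]
  exact isGDD_transfer 4 _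
    ((Equiv.sumCongr finProdFinEquiv (Equiv.refl (Fin m))).trans
      (finSumFinEquiv.trans (finCongr hsum.symm)))
    hL'len (inflGrp L.sum u m) (F1 ∪ F2) hneMain hgcMain hszMain hcovMain hngMain
end

section
/- Suppose g ≥ 4, u ≥ 4, g ≡ 1 (mod 3), m ≤ (u−1)/2, there exists a 4-DGDD of type (g, 1^g)^u, and there exists a 4-GDD of type 1^u m^1. Then there exists a 4-GDD of type g^u m^1. -/
open Finset

/-- If `g ≥ 4`, `u ≥ 4`, `g ≡ 1 (mod 3)`, `m ≤ (u−1)/2`, there exists a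
4-DGDD of type `(g, 1^g)^u` and a 4-GDD of type `1^u m^1`, then there exists
a 4-GDD of type `g^u m^1`. -/
theorem fourGDD_from_DGDD_and_fill (g u m : ℕ)
    (hg : 4 ≤ g) (hu : 4 ≤ u) (hg3 : g % 3 = 1) (hm : 2 * m ≤ u - 1)
    (hdgdd : Is4DGDD g u)
    (hfill : IsGDD 4 (List.replicate u 1 ++ [m])) :
    IsGDD 4 (List.replicate u g ++ [m]) := by
  
  classical
  unfold Is4DGDD at hdgdd
  unfold IsGDD at hfill ⊢
  obtain ⟨grpD, holeD, BD, hBDne, hGsz, hHsz, hGH, hBDcard, hDcov, hDforb⟩ := hdgdd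
  obtain ⟨grpF, BF, hBFne, hFsz, hBFcard, hFcov, hFforb⟩ := hfill
  have hT : (List.replicate u g ++ [m]).sum = g * u + m := by
    simp [List.sum_replicate, smul_eq_mul, Nat.mul_comm]
  have hLen : (List.replicate u g ++ [m]).length = u + 1 := by simp
  have hLenF : (List.replicate u 1 ++ [m]).length = u + 1 := by simp
  -- point injections
  let old : Fin (g * u) → Fin (List.replicate u g ++ [m]).sum :=
    fun x => ⟨x.1, by have := x.2; omega⟩
  let new : Fin m → Fin (List.replicate u g ++ [m]).sum :=
    fun z => ⟨g * u + z.1, by have := z.2; omega⟩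
  have hold_val : ∀ a, (old a).1 = a.1 := fun a => rfl
  have hnew_val : ∀ z, (new z).1 = g * u + z.1 := fun z => rfl
  have hold_inj : Function.Injective old := by
    intro a b h
    have h2 := congrArg Fin.val h
    rw [hold_val, hold_val] at h2
    exact Fin.ext h2
  have hnew_inj : Function.Injective new := by
    intro a b h
    have := congrArg Fin.val h
    simp only [hnew_val] at this
    exact Fin.ext (by omega)
  have hold_ne_new : ∀ a z, old a ≠ new z := by
    intro a z h
    have := congrArg Fin.val h
    have h2 := a.2
    simp only [hold_val, hnew_val] at this
    omega
  -- group map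
  let lastI : Fin (List.replicate u g ++ [m]).length := ⟨u, by omega⟩
  let grp : Fin (List.replicate u g ++ [m]).sum → Fin (List.replicate u g ++ [m]).length :=
    fun p => if h : p.1 < g * u then ⟨(grpD ⟨p.1, h⟩).1, by have := (grpD ⟨p.1, h⟩).2; omega⟩
      else lastI
  have hgrp_old : ∀ a, grp (old a) = ⟨(grpD a).1, by have := (grpD a).2; omega⟩ := by
    intro a
    show dite _ _ _ = _
    rw [dif_pos (a.2 : (old a).1 < g * u)]
  have hgrp_new : ∀ z, grp (new z) = lastI := by
    intro z
    show dite _ _ _ = _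
    rw [dif_neg (by simp only [hnew_val]; omega)]
  have hdecomp : ∀ p : Fin (List.replicate u g ++ [m]).sum,
      (∃ a, p = old a) ∨ (∃ z, p = new z) := by
    intro p
    by_cases h : p.1 < g * u
    · exact Or.inl ⟨⟨p.1, h⟩, Fin.ext rfl⟩
    · refine Or.inr ⟨⟨p.1 - g * u, by have := p.2; omega⟩, Fin.ext ?_⟩
      show p.1 = g * u + (p.1 - g * u)
      omega
  -- DGDD intersection points
  have hGH1 : ∀ (i : Fin u) (j : Fin g), ∃ x, (grpD x = i ∧ holeD x = j) ∧
      ∀ y, (grpD y = i ∧ holeD y = j) → y = x := by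
    intro i j
    obtain ⟨a, ha⟩ := Finset.card_eq_one.mp (hGH i j)
    have hmem : ∀ y, (grpD y = i ∧ holeD y = j) ↔ y = a := by
      intro y
      constructor
      · intro hy
        have : y ∈ Finset.univ.filter fun x => grpD x = i ∧ holeD x = j :=
          mem_filter.mpr ⟨mem_univ _, hy⟩
        rw [ha] at this; simpa using this
      · intro hy
        have h2 : a ∈ Finset.univ.filter fun x => grpD x = i ∧ holeD x = j := by
          rw [ha]; exact mem_singleton_self a
        rw [hy]
        exact (mem_filter.mp h2).2
    exact ⟨a, (hmem a).mpr rfl, fun y hy => (hmem y).mp hy⟩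
  choose ptD hptD hptDu using hGH1
  have hptD_self : ∀ a : Fin (g * u), ptD (grpD a) (holeD a) = a := by
    intro a
    exact (hptDu (grpD a) (holeD a) a ⟨rfl, rfl⟩).symm
  -- fill list get facts
  have hgetF : ∀ i : Fin (List.replicate u 1 ++ [m]).length,
      (List.replicate u 1 ++ [m]).get i = if i.1 < u then 1 else m := by
    intro i
    by_cases hi : i.1 < u
    · rw [List.get_eq_getElem, List.getElem_append_left (by simpa using hi)]
      simp [hi]
    · have hi' : i.1 = u := by have := i.2; omega
      rw [List.get_eq_getElem, List.getElem_append_right (by simp [hi'])]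
      simp [hi, hi']
  have hgetG : ∀ i : Fin (List.replicate u g ++ [m]).length,
      (List.replicate u g ++ [m]).get i = if i.1 < u then g else m := by
    intro i
    by_cases hi : i.1 < u
    · rw [List.get_eq_getElem, List.getElem_append_left (by simpa using hi)]
      simp [hi]
    · have hi' : i.1 = u := by have := i.2; omega
      rw [List.get_eq_getElem, List.getElem_append_right (by simp [hi'])]
      simp [hi, hi']
  -- fill singleton points
  let iF : Fin u → Fin (List.replicate u 1 ++ [m]).length := fun i => ⟨i.1, by omega⟩
  let lastF : Fin (List.replicate u 1 ++ [m]).length := ⟨u, by omega⟩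
  have hsingF : ∀ i : Fin u, ∃ q, (grpF q = iF i) ∧ ∀ r, grpF r = iF i → r = q := by
    intro i
    have h1 : (Finset.univ.filter fun q => grpF q = iF i).card = 1 := by
      rw [hFsz, hgetF]
      simp [iF, i.2]
    obtain ⟨a, ha⟩ := Finset.card_eq_one.mp h1
    have hmem : ∀ y, grpF y = iF i ↔ y = a := by
      intro y
      constructor
      · intro hy
        have : y ∈ Finset.univ.filter fun q => grpF q = iF i := mem_filter.mpr ⟨mem_univ _, hy⟩
        rw [ha] at this; simpa using this
      · intro hy
        have h2 : a ∈ Finset.univ.filter fun q => grpF q = iF i := by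
          rw [ha]; exact mem_singleton_self a
        rw [hy]
        exact (mem_filter.mp h2).2
    exact ⟨a, (hmem a).mpr rfl, fun y hy => (hmem y).mp hy⟩
  choose ptF hptF hptFu using hsingF
  -- big fill group
  let bigF := Finset.univ.filter fun q => grpF q = lastF
  have hbigcard : bigF.card = m := by
    have h1 := hFsz lastF
    rw [hgetF, if_neg (show ¬ (lastF.1 < u) from Nat.lt_irrefl u)] at h1
    exact h1
  let Geq : {x // x ∈ bigF} ≃ Fin m := Finset.equivFinOfCardEq hbigcard
  have hbig_mem : ∀ q, q ∈ bigF ↔ grpF q = lastF := by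
    intro q; simp [bigF]
  -- the embeddings
  have hgrpF_lt : ∀ q, (grpF q).1 < u + 1 := fun q => by
    have h1 := (grpF q).2
    omega
  let φ : Fin g → Fin (List.replicate u 1 ++ [m]).sum → Fin (List.replicate u g ++ [m]).sum :=
    fun j q => if h : (grpF q).1 < u then old (ptD ⟨(grpF q).1, h⟩ j)
      else new (Geq ⟨q, (hbig_mem q).mpr (Fin.ext (show (grpF q).1 = u by
        have := hgrpF_lt q; omega))⟩)
  have hφ1 : ∀ j q (h : (grpF q).1 < u), φ j q = old (ptD ⟨(grpF q).1, h⟩ j) := by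
    intro j q h
    show dite _ _ _ = _
    rw [dif_pos h]
  have hφ2 : ∀ j q (hq : grpF q = lastF), φ j q = new (Geq ⟨q, (hbig_mem q).mpr hq⟩) := by
    intro j q hq
    have h : ¬ (grpF q).1 < u := by rw [hq]; simp [lastF]
    show dite _ _ _ = _
    rw [dif_neg h]
  have hφ_ptF : ∀ j i, φ j (ptF i) = old (ptD i j) := by
    intro j i
    have h : (grpF (ptF i)).1 < u := by rw [hptF i]; exact i.2
    rw [hφ1 j _ h]
    have h2 : (⟨(grpF (ptF i)).1, h⟩ : Fin u) = i :=
      Fin.ext (show (grpF (ptF i)).1 = i.1 from congrArg Fin.val (hptF i))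
    exact congrArg (fun t => old (ptD t j)) h2
  have hφ_big : ∀ j (z : Fin m), φ j (Geq.symm z).1 = new z := by
    intro j z
    have hq : grpF (Geq.symm z).1 = lastF := (hbig_mem _).mp (Geq.symm z).2
    rw [hφ2 j _ hq]
    have h3 : (⟨(Geq.symm z).1, (hbig_mem _).mpr hq⟩ : {x // x ∈ bigF}) = Geq.symm z :=
      Subtype.ext rfl
    exact congrArg new ((congrArg Geq h3).trans (Equiv.apply_symm_apply Geq z))
  have hφ_old : ∀ j q a, φ j q = old a → holeD a = j ∧ q = ptF (grpD a) := by
    intro j q a h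
    by_cases hq : (grpF q).1 < u
    · rw [hφ1 j q hq] at h
      have ha : ptD ⟨(grpF q).1, hq⟩ j = a := hold_inj h
      obtain ⟨hg1, hh1⟩ := hptD ⟨(grpF q).1, hq⟩ j
      rw [ha] at hg1 hh1
      refine ⟨hh1, hptFu (grpD a) q ?_⟩
      rw [hg1]
    · have hq' : grpF q = lastF := Fin.ext (show (grpF q).1 = u by have := hgrpF_lt q; omega)
      rw [hφ2 j q hq'] at h
      exact absurd h.symm (hold_ne_new a _)
  have hφ_new : ∀ j q (z : Fin m), φ j q = new z → q = (Geq.symm z).1 := by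
    intro j q z h
    by_cases hq : (grpF q).1 < u
    · rw [hφ1 j q hq] at h
      exact absurd h (hold_ne_new _ z)
    · have hq' : grpF q = lastF := Fin.ext (show (grpF q).1 = u by have := hgrpF_lt q; omega)
      rw [hφ2 j q hq'] at h
      have := hnew_inj h
      have h2 : (⟨q, (hbig_mem q).mpr hq'⟩ : {x // x ∈ bigF}) = Geq.symm z := by
        rw [← this, Equiv.symm_apply_apply]
      exact congrArg Subtype.val h2
  have hφinj : ∀ j, Function.Injective (φ j) := by
    intro j p q h
    by_cases hp : (grpF p).1 < u
    · obtain ⟨_, hpq⟩ := hφ_old j q _ (h.symm.trans (hφ1 j p hp))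
      obtain ⟨hg1, _⟩ := hptD ⟨(grpF p).1, hp⟩ j
      rw [hpq, hg1]
      apply hptFu
      exact Fin.ext rfl
    · have hp' : grpF p = lastF := Fin.ext (show (grpF p).1 = u by
        have := hgrpF_lt p; omega)
      rw [hφ2 j p hp'] at h
      have hq2 := hφ_new j q _ h.symm
      rw [Equiv.symm_apply_apply] at hq2
      exact hq2.symm
  have hgrp_old_val : ∀ a, (grp (old a)).1 = (grpD a).1 := fun a => congrArg Fin.val (hgrp_old a)
  have hgrp_new_val : ∀ z, (grp (new z)).1 = u := fun z => congrArg Fin.val (hgrp_new z)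
  -- block set
  let B : Finset (Finset (Fin (List.replicate u g ++ [m]).sum)) :=
    (BD.image fun b => b.image old) ∪
      Finset.univ.biUnion fun j : Fin g => BF.image fun b => b.image (φ j)
  have hmemB : ∀ b, b ∈ B ↔ (∃ b0 ∈ BD, b0.image old = b) ∨
      ∃ j : Fin g, ∃ b0 ∈ BF, b0.image (φ j) = b := by
    intro b
    simp [B, mem_union, mem_image, mem_biUnion]
  have hmem_oldimg : ∀ (b0 : Finset (Fin (g * u))) (a : Fin (g * u)),
      old a ∈ b0.image old ↔ a ∈ b0 := by
    intro b0 a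
    constructor
    · intro h
      obtain ⟨c, hc, hca⟩ := mem_image.mp h
      rwa [← hold_inj hca]
    · intro h; exact mem_image_of_mem _ h
  have hnew_notin_old : ∀ (b0 : Finset (Fin (g * u))) (z : Fin m),
      new z ∉ b0.image old := by
    intro b0 z h
    obtain ⟨a, _, ha⟩ := mem_image.mp h
    exact hold_ne_new a z ha
  -- coverage helpers
  have covOO : ∀ a c : Fin (g * u), grpD a ≠ grpD c →
      ∃! t, t ∈ B ∧ old a ∈ t ∧ old c ∈ t := by
    intro a c hne
    by_cases hh : holeD a = holeD c
    · have hgne : grpF (ptF (grpD a)) ≠ grpF (ptF (grpD c)) := by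
        rw [hptF, hptF]
        intro hcon
        have h6 : (iF (grpD a)).1 = (iF (grpD c)).1 := congrArg Fin.val hcon
        exact hne (Fin.ext h6)
      obtain ⟨bF, ⟨hbF, hpa, hpc⟩, hbFu⟩ := hFcov _ _ hgne
      have he1 : φ (holeD a) (ptF (grpD a)) = old a := by rw [hφ_ptF, hptD_self]
      have he2 : φ (holeD a) (ptF (grpD c)) = old c := by rw [hφ_ptF, hh, hptD_self]
      refine ⟨bF.image (φ (holeD a)),
        ⟨(hmemB _).mpr (Or.inr ⟨holeD a, bF, hbF, rfl⟩), ?_, ?_⟩, ?_⟩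
      · rw [← he1]; exact mem_image_of_mem _ hpa
      · rw [← he2]; exact mem_image_of_mem _ hpc
      · rintro t ⟨htB, hta, htc⟩
        rcases (hmemB t).mp htB with ⟨b0, hb0, rfl⟩ | ⟨j', b0, hb0, rfl⟩
        · exfalso
          have hac : a ≠ c := fun h => hne (by rw [h])
          exact hDforb a c hac (Or.inr hh) b0 hb0
            ((hmem_oldimg b0 a).mp hta) ((hmem_oldimg b0 c).mp htc)
        · obtain ⟨p, hp, hpe⟩ := mem_image.mp hta
          obtain ⟨q, hq, hqe⟩ := mem_image.mp htc
          obtain ⟨hja, hpa'⟩ := hφ_old j' p a hpe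
          obtain ⟨hjc, hqc'⟩ := hφ_old j' q c hqe
          rw [hpa'] at hp
          rw [hqc'] at hq
          rw [hbFu b0 ⟨hb0, hp, hq⟩, ← hja]
    · obtain ⟨b0, ⟨hb0, ha0, hc0⟩, hb0u⟩ := hDcov a c hne hh
      refine ⟨b0.image old, ⟨(hmemB _).mpr (Or.inl ⟨b0, hb0, rfl⟩),
        mem_image_of_mem _ ha0, mem_image_of_mem _ hc0⟩, ?_⟩
      rintro t ⟨htB, hta, htc⟩
      rcases (hmemB t).mp htB with ⟨b1, hb1, rfl⟩ | ⟨j', b1, hb1, rfl⟩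
      · rw [hb0u b1 ⟨hb1, (hmem_oldimg _ _).mp hta, (hmem_oldimg _ _).mp htc⟩]
      · exfalso
        obtain ⟨p, hp, hpe⟩ := mem_image.mp hta
        obtain ⟨q, hq, hqe⟩ := mem_image.mp htc
        obtain ⟨hja, _⟩ := hφ_old j' p a hpe
        obtain ⟨hjc, _⟩ := hφ_old j' q c hqe
        exact hh (hja.trans hjc.symm)
  have covON : ∀ (a : Fin (g * u)) (z : Fin m),
      ∃! t, t ∈ B ∧ old a ∈ t ∧ new z ∈ t := by
    intro a z
    have hgne : grpF (ptF (grpD a)) ≠ grpF ((Geq.symm z).1) := by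
      rw [hptF, (hbig_mem _).mp (Geq.symm z).2]
      intro hcon
      have h2 : (grpD a).1 = u := congrArg Fin.val hcon
      have := (grpD a).2
      omega
    obtain ⟨bF, ⟨hbF, hpa, hpz⟩, hbFu⟩ := hFcov _ _ hgne
    have he1 : φ (holeD a) (ptF (grpD a)) = old a := by rw [hφ_ptF, hptD_self]
    refine ⟨bF.image (φ (holeD a)),
      ⟨(hmemB _).mpr (Or.inr ⟨holeD a, bF, hbF, rfl⟩), ?_, ?_⟩, ?_⟩
    · rw [← he1]; exact mem_image_of_mem _ hpa
    · rw [← hφ_big (holeD a) z]; exact mem_image_of_mem _ hpz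
    · rintro t ⟨htB, hta, htz⟩
      rcases (hmemB t).mp htB with ⟨b1, hb1, rfl⟩ | ⟨j', b1, hb1, rfl⟩
      · exact absurd htz (hnew_notin_old b1 z)
      · obtain ⟨p, hp, hpe⟩ := mem_image.mp hta
        obtain ⟨q, hq, hqe⟩ := mem_image.mp htz
        obtain ⟨hja, hpa'⟩ := hφ_old j' p a hpe
        have hqz := hφ_new j' q z hqe
        rw [hpa'] at hp
        rw [hqz] at hq
        rw [hbFu b1 ⟨hb1, hp, hq⟩, ← hja]
  refine ⟨grp, B, ?_, ?_, ?_, ?_, ?_⟩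
  · obtain ⟨b0, hb0⟩ := hBDne
    exact ⟨b0.image old, (hmemB _).mpr (Or.inl ⟨b0, hb0, rfl⟩)⟩
  · intro i
    by_cases hi : i.1 < u
    · have hfe : (Finset.univ.filter fun x => grp x = i) =
          (Finset.univ.filter fun x => grpD x = ⟨i.1, hi⟩).image old := by
        ext p
        simp only [mem_filter, mem_univ, true_and, mem_image]
        constructor
        · intro hp
          rcases hdecomp p with ⟨a, rfl⟩ | ⟨z, rfl⟩
          · exact ⟨a, Fin.ext ((hgrp_old_val a).symm.trans (congrArg Fin.val hp)), rfl⟩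
          · exfalso
            rw [hgrp_new z] at hp
            have h2 : (u : ℕ) = i.1 := congrArg Fin.val hp
            omega
        · rintro ⟨a, ha, rfl⟩
          exact Fin.ext ((hgrp_old_val a).trans (congrArg Fin.val ha))
      rw [hfe, Finset.card_image_of_injective _ hold_inj, hGsz, hgetG, if_pos hi]
    · have hfe : (Finset.univ.filter fun x => grp x = i) =
          Finset.univ.image new := by
        ext p
        simp only [mem_filter, mem_univ, true_and, mem_image]
        constructor
        · intro hp
          rcases hdecomp p with ⟨a, rfl⟩ | ⟨z, rfl⟩
          · exfalso
            have h2 : (grpD a).1 = i.1 := (hgrp_old_val a).symm.trans (congrArg Fin.val hp)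
            have h3 := (grpD a).2
            have h4 := i.2
            omega
          · exact ⟨z, rfl⟩
        · rintro ⟨z, rfl⟩
          have h4 := i.2
          exact Fin.ext ((hgrp_new_val z).trans (by omega))
      rw [hfe, Finset.card_image_of_injective _ hnew_inj, card_univ, Fintype.card_fin,
        hgetG, if_neg hi]
  · intro b hb
    rcases (hmemB b).mp hb with ⟨b0, hb0, rfl⟩ | ⟨j, b0, hb0, rfl⟩
    · rw [Finset.card_image_of_injective _ hold_inj]
      exact hBDcard b0 hb0
    · rw [Finset.card_image_of_injective _ (hφinj j)]
      exact hBFcard b0 hb0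
  · intro x y hxy
    rcases hdecomp x with ⟨a, rfl⟩ | ⟨z, rfl⟩
    · rcases hdecomp y with ⟨c, rfl⟩ | ⟨w, rfl⟩
      · apply covOO
        intro hcon
        exact hxy (Fin.ext (((hgrp_old_val a).trans (congrArg Fin.val hcon)).trans
          (hgrp_old_val c).symm))
      · exact covON a w
    · rcases hdecomp y with ⟨c, rfl⟩ | ⟨w, rfl⟩
      · obtain ⟨t, ⟨h1, h2, h3⟩, hu'⟩ := covON c z
        exact ⟨t, ⟨h1, h3, h2⟩, fun t' ht' => hu' t' ⟨ht'.1, ht'.2.2, ht'.2.1⟩⟩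
      · exact absurd ((hgrp_new z).trans (hgrp_new w).symm) hxy
  · intro x y hxy hgxy b hbB hxB hyB
    rcases hdecomp x with ⟨a, rfl⟩ | ⟨z, rfl⟩
    · rcases hdecomp y with ⟨c, rfl⟩ | ⟨w, rfl⟩
      · have hac : a ≠ c := fun h => hxy (by rw [h])
        have hgac : grpD a = grpD c := Fin.ext
          ((hgrp_old_val a).symm.trans ((congrArg Fin.val hgxy).trans (hgrp_old_val c)))
        rcases (hmemB b).mp hbB with ⟨b0, hb0, rfl⟩ | ⟨j, b0, hb0, rfl⟩
        · exact hDforb a c hac (Or.inl hgac) b0 hb0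
            ((hmem_oldimg _ _).mp hxB) ((hmem_oldimg _ _).mp hyB)
        · obtain ⟨p, hp, hpe⟩ := mem_image.mp hxB
          obtain ⟨q, hq, hqe⟩ := mem_image.mp hyB
          obtain ⟨hja, hpa⟩ := hφ_old j p a hpe
          obtain ⟨hjc, hqc⟩ := hφ_old j q c hqe
          have h4 : c = ptD (grpD a) j := hptDu _ _ c ⟨hgac.symm, hjc⟩
          have h5 : a = ptD (grpD a) j := hptDu _ _ a ⟨rfl, hja⟩
          exact hac (h5.trans h4.symm)
      · have h1 : (grpD a).1 = u :=
          ((hgrp_old_val a).symm.trans (congrArg Fin.val hgxy)).trans (hgrp_new_val w)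
        have := (grpD a).2
        omega
    · rcases hdecomp y with ⟨c, rfl⟩ | ⟨w, rfl⟩
      · have h1 : (grpD c).1 = u :=
          ((hgrp_old_val c).symm.trans (congrArg Fin.val hgxy.symm)).trans (hgrp_new_val z)
        have := (grpD c).2
        omega
      · have hzw : z ≠ w := fun h => hxy (by rw [h])
        rcases (hmemB b).mp hbB with ⟨b0, hb0, rfl⟩ | ⟨j, b0, hb0, rfl⟩
        · exact hnew_notin_old b0 z hxB
        · obtain ⟨p, hp, hpe⟩ := mem_image.mp hxB
          obtain ⟨q, hq, hqe⟩ := mem_image.mp hyB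
          have hpz := hφ_new j p z hpe
          have hqw := hφ_new j q w hqe
          have hpq : p ≠ q := by
            intro h
            apply hzw
            rw [hpz, hqw] at h
            exact Geq.symm.injective (Subtype.ext h)
          have hgf : grpF p = grpF q := by
            rw [hpz, hqw, (hbig_mem _).mp (Geq.symm z).2, (hbig_mem _).mp (Geq.symm w).2]
          exact hFforb p q hpq hgf b0 hb0 hp hq
end

section
/- Let a and b be positive integers. If there exists a 4-GDD of type (3a)^4 (6a)^1 (3b)^1, then a ≤ b ≤ 2a. -/
open Finset

/-- If `a` and `b` are positive integers and there exists a 4-GDD of type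
`(3a)^4 (6a)^1 (3b)^1`, then `a ≤ b ≤ 2a`. -/
theorem bounds_of_fourGDD_3a4_6a_3b (a b : ℕ) (ha : 0 < a) (hb : 0 < b)
    (h : IsGDD 4 (List.replicate 4 (3 * a) ++ [6 * a, 3 * b])) :
    a ≤ b ∧ b ≤ 2 * a := by
  classical
  set L : List ℕ := List.replicate 4 (3 * a) ++ [6 * a, 3 * b] with hLdef
  obtain ⟨grp, B, hne, hsize, hcard4, hpair, hsame⟩ := h
  have hlen : L.length = 6 := by simp [hLdef]
  have hsum : L.sum = 18 * a + 3 * b := by simp [hLdef]; ring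
  -- In a block containing x, every other point has a different group
  have hdiff : ∀ (x y : Fin L.sum) (bl : Finset (Fin L.sum)), bl ∈ B → x ∈ bl → y ∈ bl →
      y ≠ x → grp y ≠ grp x := by
    intro x y bl hbl hx hy hyx hgr
    exact hsame x y (Ne.symm hyx) hgr.symm bl hbl hx hy
  -- Double counting: 3 * (number of blocks through x) = number of points outside x's group
  have hcount : ∀ x : Fin L.sum,
      3 * (B.filter (fun bl => x ∈ bl)).card
        = (univ.filter fun y => ¬ grp y = grp x).card := by
    intro x
    have hU : (univ.filter fun y => ¬ grp y = grp x)
        = (B.filter (fun bl => x ∈ bl)).biUnion (fun bl => bl.erase x) := by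
      ext y
      simp only [mem_filter, mem_univ, true_and, mem_biUnion, mem_erase]
      constructor
      · intro hy
        obtain ⟨bl, ⟨hbB, hxb, hyb⟩, _⟩ := hpair x y (fun e => hy e.symm)
        exact ⟨bl, ⟨hbB, hxb⟩, fun e => hy (e ▸ rfl), hyb⟩
      · rintro ⟨bl, ⟨hbB, hxb⟩, hyx, hyb⟩
        exact hdiff x y bl hbB hxb hyb hyx
    have hdisj : ∀ b1 ∈ B.filter (fun bl => x ∈ bl), ∀ b2 ∈ B.filter (fun bl => x ∈ bl),
        b1 ≠ b2 → Disjoint (b1.erase x) (b2.erase x) := by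
      intro b1 hb1 b2 hb2 hneq
      simp only [mem_filter] at hb1 hb2
      rw [Finset.disjoint_left]
      intro y hy1 hy2
      rw [mem_erase] at hy1 hy2
      have hgr : grp x ≠ grp y :=
        Ne.symm (hdiff x y b1 hb1.1 hb1.2 hy1.2 hy1.1)
      obtain ⟨bl, _, huniq⟩ := hpair x y hgr
      have e1 : b1 = bl := huniq b1 ⟨hb1.1, hb1.2, hy1.2⟩
      have e2 : b2 = bl := huniq b2 ⟨hb2.1, hb2.2, hy2.2⟩
      exact hneq (e1.trans e2.symm)
    have hersz : ∀ bl ∈ B.filter (fun bl => x ∈ bl), (bl.erase x).card = 3 := by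
      intro bl hbl
      simp only [mem_filter] at hbl
      rw [Finset.card_erase_of_mem hbl.2, hcard4 bl hbl.1]
    rw [hU, Finset.card_biUnion hdisj, Finset.sum_congr rfl hersz, Finset.sum_const,
      smul_eq_mul, mul_comm]
  -- Each other group injects into the blocks through x
  have hge : ∀ (x : Fin L.sum) (j : Fin L.length), grp x ≠ j →
      L.get j ≤ (B.filter (fun bl => x ∈ bl)).card := by
    intro x j hj
    rw [← hsize j]
    apply Finset.card_le_card_of_injOn
      (fun y => if h : grp x ≠ grp y then (hpair x y h).choose else ∅)
    · intro y hy
      simp only [mem_coe, mem_filter, mem_univ, true_and] at hy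
      have hxy : grp x ≠ grp y := by rw [hy]; exact hj
      beta_reduce
      rw [dif_pos hxy]
      obtain ⟨h1, h2, _⟩ := (hpair x y hxy).choose_spec.1
      simp only [mem_coe, mem_filter]
      exact ⟨h1, h2⟩
    · intro y hy y' hy' heq
      simp only [coe_filter, Set.mem_setOf_eq, mem_univ, true_and] at hy hy'
      have hxy : grp x ≠ grp y := by rw [hy]; exact hj
      have hxy' : grp x ≠ grp y' := by rw [hy']; exact hj
      simp only [dif_pos hxy, dif_pos hxy'] at heq
      by_contra hne'
      obtain ⟨hB1, _, hyb⟩ := (hpair x y hxy).choose_spec.1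
      obtain ⟨_, _, hyb'⟩ := (hpair x y' hxy').choose_spec.1
      exact hsame y y' hne' (hy.trans hy'.symm) _ hB1 hyb (heq ▸ hyb')
  -- existence of a point in any nonempty group
  have hex : ∀ j : Fin L.length, 0 < L.get j → ∃ x, grp x = j := by
    intro j hj
    have hpos : 0 < (univ.filter fun x => grp x = j).card := by rw [hsize j]; exact hj
    obtain ⟨x, hx⟩ := Finset.card_pos.mp hpos
    simp only [mem_filter] at hx
    exact ⟨x, hx.2⟩
  -- total count through a point
  have htot : ∀ x : Fin L.sum,
      (univ.filter fun y => grp y = grp x).card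
        + (univ.filter fun y => ¬ grp y = grp x).card = 18 * a + 3 * b := by
    intro x
    rw [Finset.card_filter_add_card_filter_not, card_univ, Fintype.card_fin, hsum]
  -- indices
  have h4 : (4 : ℕ) < L.length := by rw [hlen]; omega
  have h5 : (5 : ℕ) < L.length := by rw [hlen]; omega
  have h0 : (0 : ℕ) < L.length := by rw [hlen]; omega
  have g0 : L.get ⟨0, h0⟩ = 3 * a := rfl
  have g4 : L.get ⟨4, h4⟩ = 6 * a := rfl
  have g5 : L.get ⟨5, h5⟩ = 3 * b := rfl
  constructor
  · -- a ≤ b : take x in a group of size 3a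
    obtain ⟨x, hx⟩ := hex ⟨0, h0⟩ (by rw [g0]; omega)
    have hge4 := hge x ⟨4, h4⟩ (by rw [hx]; intro e; exact absurd (Fin.mk.injEq .. ▸ e) (by omega))
    have hc := hcount x
    have ht := htot x
    have hs : (univ.filter fun y => grp y = grp x).card = 3 * a := by
      rw [hsize (grp x), hx, g0]
    rw [g4] at hge4
    omega
  · -- b ≤ 2a : take x in the group of size 6a
    obtain ⟨x, hx⟩ := hex ⟨4, h4⟩ (by rw [g4]; omega)
    have hge5 := hge x ⟨5, h5⟩ (by rw [hx]; intro e; exact absurd (Fin.mk.injEq .. ▸ e) (by omega))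
    have hc := hcount x
    have ht := htot x
    have hs : (univ.filter fun y => grp y = grp x).card = 6 * a := by
      rw [hsize (grp x), hx, g4]
    rw [g5] at hge5
    omega
end
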